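/- arXiv:2303.15802 — 4 statements merged into one kernel-verified Lean document; each statement's English description precedes it below -/
import Mathlib

section
/- The complete lattice tors A is completely semidistributive: for any torsion class X and any set S of torsion classes, if X ∨ Y = Z for all Y ∈ S then X ∨ (⋀ S) = Z, and if X ∧ Y = Z for all Y ∈ S then X ∧ (⋁ S) = Z. -/
/-! Preamble: the category `mod A` of finite-dimensional right `A`-modules,
torsion(-free) classes, the complete lattice `tors A`, functorially finite
torsion classes, bricks, etc. -/

open Function

/-- A bundled finite-dimensional (i.e. finitely generated) right `A`-module,
realized as a left module over `Aᵐᵒᵖ`. -/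
structure ModA (A : Type) [Ring A] : Type 1 where
  carrier : Type
  [isAddCommGroup : AddCommGroup carrier]
  [isModule : Module Aᵐᵒᵖ carrier]
  [isFinite : Module.Finite Aᵐᵒᵖ carrier]

attribute [instance] ModA.isAddCommGroup ModA.isModule ModA.isFinite

namespace ModA

variable {A : Type} [Ring A]

instance : CoeSort (ModA A) Type := ⟨ModA.carrier⟩

end ModA

section TorsionTheory

variable {A : Type} [Ring A]

/-- A torsion class: a class of finite-dimensional right `A`-modules containing the
zero modules, closed under quotient modules and under extensions. -/
def IsTorsionClass (T : Set (ModA A)) : Prop :=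
  (∀ N : ModA A, Subsingleton N.carrier → N ∈ T) ∧
  (∀ M N : ModA A, M ∈ T → ∀ f : M.carrier →ₗ[Aᵐᵒᵖ] N.carrier, Surjective f → N ∈ T) ∧
  (∀ (X Y Z : ModA A) (f : X.carrier →ₗ[Aᵐᵒᵖ] Y.carrier) (g : Y.carrier →ₗ[Aᵐᵒᵖ] Z.carrier),
    Injective f → Surjective g → LinearMap.range f = LinearMap.ker g →
    X ∈ T → Z ∈ T → Y ∈ T)

/-- A torsion-free class: a class of finite-dimensional right `A`-modules containing the
zero modules, closed under submodules and under extensions. -/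
def IsTorsionFreeClass (F : Set (ModA A)) : Prop :=
  (∀ N : ModA A, Subsingleton N.carrier → N ∈ F) ∧
  (∀ M N : ModA A, M ∈ F → ∀ f : N.carrier →ₗ[Aᵐᵒᵖ] M.carrier, Injective f → N ∈ F) ∧
  (∀ (X Y Z : ModA A) (f : X.carrier →ₗ[Aᵐᵒᵖ] Y.carrier) (g : Y.carrier →ₗ[Aᵐᵒᵖ] Z.carrier),
    Injective f → Surjective g → LinearMap.range f = LinearMap.ker g →
    X ∈ F → Z ∈ F → Y ∈ F)

theorem isTorsionClass_sInter {S : Set (Set (ModA A))} (h : ∀ T ∈ S, IsTorsionClass T) :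
    IsTorsionClass (⋂₀ S) := by
  refine ⟨fun N hN => ?_, fun M N hM f hf => ?_, fun X Y Z f g hf hg he hX hZ => ?_⟩
  · exact Set.mem_sInter.2 fun T hT => (h T hT).1 N hN
  · exact Set.mem_sInter.2 fun T hT => (h T hT).2.1 M N (Set.mem_sInter.1 hM T hT) f hf
  · exact Set.mem_sInter.2 fun T hT =>
      (h T hT).2.2 X Y Z f g hf hg he (Set.mem_sInter.1 hX T hT) (Set.mem_sInter.1 hZ T hT)

theorem isTorsionFreeClass_sInter {S : Set (Set (ModA A))} (h : ∀ F ∈ S, IsTorsionFreeClass F) :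
    IsTorsionFreeClass (⋂₀ S) := by
  refine ⟨fun N hN => ?_, fun M N hM f hf => ?_, fun X Y Z f g hf hg he hX hZ => ?_⟩
  · exact Set.mem_sInter.2 fun T hT => (h T hT).1 N hN
  · exact Set.mem_sInter.2 fun T hT => (h T hT).2.1 M N (Set.mem_sInter.1 hM T hT) f hf
  · exact Set.mem_sInter.2 fun T hT =>
      (h T hT).2.2 X Y Z f g hf hg he (Set.mem_sInter.1 hX T hT) (Set.mem_sInter.1 hZ T hT)

end TorsionTheory

/-- `tors A`: the poset of all torsion classes in `mod A`, ordered by inclusion. -/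
def Tors (A : Type) [Ring A] : Type 1 := {T : Set (ModA A) // IsTorsionClass T}

/-- `torf A`: the poset of all torsion-free classes in `mod A`, ordered by inclusion. -/
def Torf (A : Type) [Ring A] : Type 1 := {F : Set (ModA A) // IsTorsionFreeClass F}

namespace Tors

variable {A : Type} [Ring A]

instance : PartialOrder (Tors A) := Subtype.partialOrder _

instance : InfSet (Tors A) :=
  ⟨fun S => ⟨⋂₀ (Subtype.val '' S),
    isTorsionClass_sInter (by rintro _ ⟨T, _, rfl⟩; exact T.2)⟩⟩

/-- `tors A` is a complete lattice, with meets given by intersections. -/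
instance : CompleteLattice (Tors A) :=
  completeLatticeOfInf _ (fun S =>
    ⟨fun T hT => Set.sInter_subset_of_mem ⟨T, hT, rfl⟩,
     fun L hL => Set.subset_sInter (by rintro _ ⟨T, hT, rfl⟩; exact hL hT)⟩)

end Tors

namespace Torf

variable {A : Type} [Ring A]

instance : PartialOrder (Torf A) := Subtype.partialOrder _

instance : InfSet (Torf A) :=
  ⟨fun S => ⟨⋂₀ (Subtype.val '' S),
    isTorsionFreeClass_sInter (by rintro _ ⟨T, _, rfl⟩; exact T.2)⟩⟩

/-- `torf A` is a complete lattice, with meets given by intersections. -/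
instance : CompleteLattice (Torf A) :=
  completeLatticeOfInf _ (fun S =>
    ⟨fun T hT => Set.sInter_subset_of_mem ⟨T, hT, rfl⟩,
     fun L hL => Set.subset_sInter (by rintro _ ⟨T, hT, rfl⟩; exact hL hT)⟩)

end Torf

section Defs

variable {A : Type} [Ring A]

/-- `T(C)`: the smallest torsion class containing the class `C` of modules. -/
def torsGen (C : Set (ModA A)) : Tors A := sInf {T : Tors A | C ⊆ T.1}

/-- `Fac M`: the class of all quotients of finite direct sums of copies of `M`. -/
def Fac (M : ModA A) : Set (ModA A) :=
  {N | ∃ (k : ℕ) (f : (Fin k → M.carrier) →ₗ[Aᵐᵒᵖ] N.carrier), Surjective f}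

/-- A class of modules is functorially finite (as a torsion class) when it is
of the form `Fac M`. -/
def IsFFSet (X : Set (ModA A)) : Prop := ∃ M : ModA A, X = Fac M

/-- A torsion class is functorially finite when it is of the form `Fac M`. -/
def IsFunctoriallyFinite (T : Tors A) : Prop := IsFFSet T.1

/-- The right Hom-orthogonal class `X^⊥`. -/
def rightPerp (X : Set (ModA A)) : Set (ModA A) :=
  {M | ∀ N ∈ X, ∀ f : N.carrier →ₗ[Aᵐᵒᵖ] M.carrier, f = 0}

/-- The left Hom-orthogonal class `^⊥X`. -/
def leftPerp (X : Set (ModA A)) : Set (ModA A) :=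
  {N | ∀ M ∈ X, ∀ f : N.carrier →ₗ[Aᵐᵒᵖ] M.carrier, f = 0}

/-- A brick: a nonzero module all of whose nonzero endomorphisms are isomorphisms. -/
def IsBrick (B : ModA A) : Prop :=
  Nontrivial B.carrier ∧
    ∀ f : B.carrier →ₗ[Aᵐᵒᵖ] B.carrier, f ≠ 0 → Bijective f

end Defs

/-- `f-tors A`: the poset of functorially finite torsion classes, ordered by inclusion. -/
def FTors (A : Type) [Ring A] : Type 1 := {T : Tors A // IsFunctoriallyFinite T}

instance {A : Type} [Ring A] : PartialOrder (FTors A) := Subtype.partialOrder _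

section Simples

variable (A : Type) [Ring A]

/-- The type of simple objects of `mod A`. -/
def SimpleMod : Type 1 := {S : ModA A // IsSimpleModule Aᵐᵒᵖ S.carrier}

/-- Isomorphism of simple modules, as an equivalence relation. -/
def simpleIsoSetoid : Setoid (SimpleMod A) where
  r S T := Nonempty (S.1.carrier ≃ₗ[Aᵐᵒᵖ] T.1.carrier)
  iseqv := ⟨fun _ => ⟨LinearEquiv.refl _ _⟩, fun ⟨e⟩ => ⟨e.symm⟩, fun ⟨e⟩ ⟨f⟩ => ⟨e.trans f⟩⟩

/-- The number of isomorphism classes of simple right `A`-modules. -/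
noncomputable def numSimples : ℕ := Nat.card (Quotient (simpleIsoSetoid A))

end Simples

section Lattice

/-- Upper semimodularity: if `a` and `b` both cover `a ⊓ b`, then `a ⊔ b` covers
both `a` and `b`. -/
def UpperSemimodular (α : Type*) [Lattice α] : Prop :=
  ∀ a b : α, a ⊓ b ⋖ a → a ⊓ b ⋖ b → a ⋖ a ⊔ b ∧ b ⋖ a ⊔ b

/-- Lower semimodularity: if `a ⊔ b` covers both `a` and `b`, then `a` and `b` both
cover `a ⊓ b`. -/
def LowerSemimodular (α : Type*) [Lattice α] : Prop :=
  ∀ a b : α, a ⋖ a ⊔ b → b ⋖ a ⊔ b → a ⊓ b ⋖ a ∧ a ⊓ b ⋖ b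

/-- An element `x` of a complete lattice is completely join irreducible if the join of
all elements strictly below `x` is strictly below `x`. -/
def CompletelyJoinIrred {α : Type*} [CompleteLattice α] (x : α) : Prop :=
  sSup {y | y < x} < x

end Lattice

/-- The statement that the poset `f-tors A` forms a lattice: any two functorially finite
torsion classes have a least upper bound and a greatest lower bound within `f-tors A`. -/
def FTorsIsLattice (A : Type) [Ring A] : Prop :=
  ∀ a b : FTors A, (∃ m, IsGLB {a, b} m) ∧ (∃ j, IsLUB {a, b} j)

/-- Upper semimodularity for the poset `f-tors A`. -/
def FTorsUpperSemimodular (A : Type) [Ring A] : Prop :=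
  ∀ a b m j : FTors A, IsGLB {a, b} m → IsLUB {a, b} j →
    m ⋖ a → m ⋖ b → a ⋖ j ∧ b ⋖ j

/-- Lower semimodularity for the poset `f-tors A`. -/
def FTorsLowerSemimodular (A : Type) [Ring A] : Prop :=
  ∀ a b m j : FTors A, IsGLB {a, b} m → IsLUB {a, b} j →
    a ⋖ j → b ⋖ j → m ⋖ a ∧ m ⋖ b

/-- A realization of a `K`-algebra `A` as a finite product of finite-dimensional
local `K`-algebras. -/
structure LocalAlgebraFactorization (K : Type) [Field K] (A : Type) [Ring A] [Algebra K A] where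
  m : ℕ
  B : Fin m → Type
  [ringB : ∀ i, Ring (B i)]
  [algB : ∀ i, Algebra K (B i)]
  finB : ∀ i, FiniteDimensional K (B i)
  localB : ∀ i, IsLocalRing (B i)
  equiv : A ≃ₐ[K] ∀ i, B i

/-- An indecomposable module: nonzero, and not the internal direct sum of two nonzero
submodules. -/
def IsIndecomposableModule (R M : Type*) [Ring R] [AddCommGroup M] [Module R M] : Prop :=
  Nontrivial M ∧ ∀ S T : Submodule R M, IsCompl S T → S = ⊥ ∨ T = ⊥

/-! ### Auxiliary development -/

section Aux

open LinearMap Submodule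

namespace SD15

variable {R : Type*} [Ring R] {M N P : Type*} [AddCommGroup M] [AddCommGroup N] [AddCommGroup P]
  [Module R M] [Module R N] [Module R P]

noncomputable def factorSurj (g : M →ₗ[R] N) (hg : Surjective g) (q : M →ₗ[R] P)
    (h : ker g ≤ ker q) : N →ₗ[R] P :=
  (Submodule.liftQ (ker g) q h).comp (g.quotKerEquivOfSurjective hg).symm.toLinearMap

theorem factorSurj_comp (g : M →ₗ[R] N) (hg : Surjective g) (q : M →ₗ[R] P)
    (h : ker g ≤ ker q) : (factorSurj g hg q h).comp g = q := by
  ext x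
  have : (g.quotKerEquivOfSurjective hg).symm (g x) = Submodule.Quotient.mk x := by
    rw [LinearEquiv.symm_apply_eq]
    simp [LinearMap.quotKerEquivOfSurjective, LinearMap.quotKerEquivRange]
  simp [factorSurj, this]

theorem factorSurj_apply (g : M →ₗ[R] N) (hg : Surjective g) (q : M →ₗ[R] P)
    (h : ker g ≤ ker q) (x : M) : (factorSurj g hg q h) (g x) = q x :=
  congrFun (congrArg (fun (f : M →ₗ[R] P) => (f : M → P)) (factorSurj_comp g hg q h)) x

noncomputable def factorInj (a : M →ₗ[R] N) (ha : Injective a) (f : P →ₗ[R] N)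
    (h : range f ≤ range a) : P →ₗ[R] M :=
  ((LinearEquiv.ofInjective a ha).symm.toLinearMap).comp
    (f.codRestrict (range a) (fun p => h (LinearMap.mem_range_self f p)))

theorem factorInj_comp (a : M →ₗ[R] N) (ha : Injective a) (f : P →ₗ[R] N)
    (h : range f ≤ range a) : a.comp (factorInj a ha f h) = f := by
  ext p
  simp only [factorInj, LinearMap.comp_apply, LinearEquiv.coe_coe]
  have h2 : ∀ y : range a, a ((LinearEquiv.ofInjective a ha).symm y) = y := by
    intro y; conv_rhs => rw [← (LinearEquiv.ofInjective a ha).apply_symm_apply y]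
    rfl
  rw [h2]; rfl

end SD15

namespace ModA

variable {A : Type} [Ring A]

/-- Quotient of a `ModA` by a submodule, as a `ModA`. -/
@[reducible] def quotM (M : ModA A) (N : Submodule Aᵐᵒᵖ M.carrier) : ModA A :=
  { carrier := M.carrier ⧸ N }

/-- A submodule of a `ModA`, as a `ModA` (needs Noetherianness for finiteness). -/
@[reducible] def subM (M : ModA A) [IsNoetherian Aᵐᵒᵖ M.carrier] (N : Submodule Aᵐᵒᵖ M.carrier) : ModA A :=
  { carrier := N }

/-- Product of two `ModA`s. -/
@[reducible] def prodM (M N : ModA A) : ModA A := { carrier := M.carrier × N.carrier }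

end ModA

section Basic

variable {A : Type} [Ring A]

theorem tc_zero {T : Set (ModA A)} (hT : IsTorsionClass T) {M : ModA A}
    (h : Subsingleton M.carrier) : M ∈ T := hT.1 M h

theorem tc_quot {T : Set (ModA A)} (hT : IsTorsionClass T) {M N : ModA A} (hM : M ∈ T)
    (f : M.carrier →ₗ[Aᵐᵒᵖ] N.carrier) (hf : Function.Surjective f) : N ∈ T :=
  hT.2.1 M N hM f hf

theorem tfc_zero {F : Set (ModA A)} (hF : IsTorsionFreeClass F) {M : ModA A}
    (h : Subsingleton M.carrier) : M ∈ F := hF.1 M h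

theorem tfc_sub {F : Set (ModA A)} (hF : IsTorsionFreeClass F) {M N : ModA A} (hM : M ∈ F)
    (f : N.carrier →ₗ[Aᵐᵒᵖ] M.carrier) (hf : Function.Injective f) : N ∈ F :=
  hF.2.1 M N hM f hf

/-- Membership transfer `M ∈ T ↔ M⧸⊥ ∈ T` for torsion classes. -/
theorem tc_mem_quotM_bot {T : Set (ModA A)} (hT : IsTorsionClass T) {M : ModA A} :
    M.quotM ⊥ ∈ T ↔ M ∈ T := by
  constructor
  · intro h
    exact tc_quot hT h (Submodule.quotEquivOfEqBot (⊥ : Submodule Aᵐᵒᵖ M.carrier) rfl).toLinearMap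
      (Submodule.quotEquivOfEqBot _ rfl).surjective
  · intro h
    exact tc_quot hT h (Submodule.mkQ ⊥) (Submodule.mkQ_surjective _)

theorem tfc_mem_quotM_bot {F : Set (ModA A)} (hF : IsTorsionFreeClass F) {M : ModA A}
    (h : M.quotM ⊥ ∈ F) : M ∈ F :=
  tfc_sub hF h ((Submodule.quotEquivOfEqBot (⊥ : Submodule Aᵐᵒᵖ M.carrier) rfl)).symm.toLinearMap
    (Submodule.quotEquivOfEqBot _ rfl).symm.injective

end Basic
section Finiteness

variable {A : Type} [Ring A]

theorem modA_isNoetherian (K : Type) [Field K] [Algebra K A] [FiniteDimensional K A] (M : ModA A) : IsNoetherian Aᵐᵒᵖ M.carrier := by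
  letI : Module K M.carrier := Module.compHom M.carrier (algebraMap K Aᵐᵒᵖ)
  haveI : IsScalarTower K Aᵐᵒᵖ M.carrier := ⟨fun k a m => by
    show (k • a) • m = (algebraMap K Aᵐᵒᵖ k) • a • m
    rw [Algebra.smul_def, mul_smul]⟩
  haveI : Module.Finite K Aᵐᵒᵖ :=
    Module.Finite.equiv (MulOpposite.opLinearEquiv K : A ≃ₗ[K] Aᵐᵒᵖ)
  haveI : Module.Finite K M.carrier := Module.Finite.trans Aᵐᵒᵖ M.carrier
  exact isNoetherian_of_tower K inferInstance

theorem modA_isArtinian (K : Type) [Field K] [Algebra K A] [FiniteDimensional K A] (M : ModA A) : IsArtinian Aᵐᵒᵖ M.carrier := by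
  letI : Module K M.carrier := Module.compHom M.carrier (algebraMap K Aᵐᵒᵖ)
  haveI : IsScalarTower K Aᵐᵒᵖ M.carrier := ⟨fun k a m => by
    show (k • a) • m = (algebraMap K Aᵐᵒᵖ k) • a • m
    rw [Algebra.smul_def, mul_smul]⟩
  haveI : Module.Finite K Aᵐᵒᵖ :=
    Module.Finite.equiv (MulOpposite.opLinearEquiv K : A ≃ₗ[K] Aᵐᵒᵖ)
  haveI : Module.Finite K M.carrier := Module.Finite.trans Aᵐᵒᵖ M.carrier
  exact isArtinian_of_tower K inferInstance

end Finiteness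

section LatticeCarrier

variable {A : Type} [Ring A]

theorem Tors.le_iff {X Y : Tors A} : X ≤ Y ↔ X.1 ⊆ Y.1 := Iff.rfl

theorem Tors.sInf_carrier (S : Set (Tors A)) (M : ModA A) :
    M ∈ (sInf S).1 ↔ ∀ Y ∈ S, M ∈ Y.1 := by
  show M ∈ ⋂₀ (Subtype.val '' S) ↔ _
  simp only [Set.mem_sInter, Set.mem_image, forall_exists_index, and_imp]
  exact ⟨fun h Y hY => h Y.1 ⟨Y, hY, rfl⟩, by rintro h T ⟨Y, hY, rfl⟩; exact h Y hY⟩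

theorem Tors.inf_carrier (X Y : Tors A) : (X ⊓ Y).1 = X.1 ∩ Y.1 := by
  have h : X ⊓ Y = sInf {X, Y} := (sInf_pair).symm
  rw [h]
  show ⋂₀ (Subtype.val '' {X, Y}) = X.1 ∩ Y.1
  ext M
  refine (Tors.sInf_carrier {X, Y} M).trans ⟨fun h => ⟨h X (Or.inl rfl), h Y (Or.inr rfl)⟩, ?_⟩
  rintro ⟨h1, h2⟩ Z hZ
  rcases hZ with rfl | rfl
  · exact h1
  · exact h2

theorem Torf.le_iff {X Y : Torf A} : X ≤ Y ↔ X.1 ⊆ Y.1 := Iff.rfl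

theorem Torf.sInf_carrier (S : Set (Torf A)) (M : ModA A) :
    M ∈ (sInf S).1 ↔ ∀ Y ∈ S, M ∈ Y.1 := by
  show M ∈ ⋂₀ (Subtype.val '' S) ↔ _
  simp only [Set.mem_sInter, Set.mem_image, forall_exists_index, and_imp]
  exact ⟨fun h Y hY => h Y.1 ⟨Y, hY, rfl⟩, by rintro h T ⟨Y, hY, rfl⟩; exact h Y hY⟩

theorem Torf.inf_carrier (X Y : Torf A) : (X ⊓ Y).1 = X.1 ∩ Y.1 := by
  have h : X ⊓ Y = sInf {X, Y} := (sInf_pair).symm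
  rw [h]
  show ⋂₀ (Subtype.val '' {X, Y}) = X.1 ∩ Y.1
  ext M
  refine (Torf.sInf_carrier {X, Y} M).trans ⟨fun h => ⟨h X (Or.inl rfl), h Y (Or.inr rfl)⟩, ?_⟩
  rintro ⟨h1, h2⟩ Z hZ
  rcases hZ with rfl | rfl
  · exact h1
  · exact h2

end LatticeCarrier
section VTors

variable {A : Type} [Ring A]

/-- The class of modules all of whose nonzero quotients contain a nonzero submodule
belonging to some member of `S`. -/
def VT (S : Set (Tors A)) : Set (ModA A) :=
  {M | ∀ (Q : ModA A) (g : M.carrier →ₗ[Aᵐᵒᵖ] Q.carrier), Function.Surjective g →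
    Nontrivial Q.carrier →
    ∃ Y ∈ S, ∃ (P : ModA A) (f : P.carrier →ₗ[Aᵐᵒᵖ] Q.carrier),
      P ∈ Y.1 ∧ Function.Injective f ∧ Nontrivial P.carrier}

theorem isTorsionClass_VT (hN : ∀ M : ModA A, IsNoetherian Aᵐᵒᵖ M.carrier)
    (S : Set (Tors A)) : IsTorsionClass (VT S) := by
  refine ⟨?_, ?_, ?_⟩
  · intro M hM Q g hg hQ
    haveI : Subsingleton Q.carrier :=
      ⟨fun a b => by
        obtain ⟨x, rfl⟩ := hg a; obtain ⟨y, rfl⟩ := hg b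
        exact congrArg g (@Subsingleton.elim _ hM x y)⟩
    exact absurd hQ (not_nontrivial Q.carrier)
  · intro M N hM f hf Q g hg hQ
    exact hM Q (g.comp f) (hg.comp hf) hQ
  · intro Xm Mm Zm a g ha hg he hX hZ Q q hq hQ
    by_cases hL : LinearMap.range (q.comp a) = ⊥
    · have hker : LinearMap.ker g ≤ LinearMap.ker q := by
        intro x hx
        have hxr : x ∈ LinearMap.range a := he ▸ hx
        obtain ⟨y, rfl⟩ := hxr
        have h0 : (q.comp a) y ∈ LinearMap.range (q.comp a) := LinearMap.mem_range_self _ y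
        rw [hL, Submodule.mem_bot] at h0
        simpa using h0
      have hq' : Function.Surjective (SD15.factorSurj g hg q hker) := by
        intro y; obtain ⟨x, rfl⟩ := hq y
        exact ⟨g x, SD15.factorSurj_apply g hg q hker x⟩
      exact hZ Q (SD15.factorSurj g hg q hker) hq' hQ
    · haveI := hN Q
      haveI hnt : Nontrivial ↥(LinearMap.range (q.comp a)) :=
        Submodule.nontrivial_iff_ne_bot.2 hL
      obtain ⟨Y, hY, P, f, hP, hfi, hPnt⟩ := hX (Q.subM (LinearMap.range (q.comp a)))
        ((q.comp a).rangeRestrict) (LinearMap.surjective_rangeRestrict _) hnt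
      exact ⟨Y, hY, P, (LinearMap.range (q.comp a)).subtype.comp f, hP,
        (Submodule.injective_subtype _).comp hfi, hPnt⟩

theorem sSup_le_VT (hN : ∀ M : ModA A, IsNoetherian Aᵐᵒᵖ M.carrier)
    (S : Set (Tors A)) : (sSup S).1 ⊆ VT S := by
  have h : sSup S ≤ (⟨VT S, isTorsionClass_VT hN S⟩ : Tors A) := by
    refine sSup_le fun Y hY => ?_
    refine Tors.le_iff.2 ?_
    intro M hM Q g hg hQ
    exact ⟨Y, hY, Q, LinearMap.id, tc_quot Y.2 hM g hg, fun a b hab => hab, hQ⟩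
  exact h

/-- Meet-semidistributivity of `tors A`. -/
theorem tors_inf_sd (hN : ∀ M : ModA A, IsNoetherian Aᵐᵒᵖ M.carrier)
    (X Z : Tors A) (S : Set (Tors A)) (hne : S.Nonempty)
    (h : ∀ Y ∈ S, X ⊓ Y = Z) : X ⊓ sSup S = Z := by
  obtain ⟨Y₀, hY₀⟩ := hne
  have hZY : ∀ Y ∈ S, Z ≤ Y := fun Y hY => (h Y hY) ▸ inf_le_right
  refine le_antisymm ?_ (le_inf ((h Y₀ hY₀) ▸ inf_le_left) ((hZY Y₀ hY₀).trans (le_sSup hY₀)))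
  rw [Tors.le_iff, Tors.inf_carrier]
  rintro M ⟨hMX, hMS⟩
  haveI := hN M
  have wf : WellFounded ((· > ·) : Submodule Aᵐᵒᵖ M.carrier → Submodule Aᵐᵒᵖ M.carrier → Prop) :=
    IsNoetherian.wf inferInstance
  have key : ∀ N : Submodule Aᵐᵒᵖ M.carrier,
      M.quotM N ∈ X.1 → M.quotM N ∈ (sSup S).1 → M.quotM N ∈ Z.1 := by
    intro N
    refine wf.induction
      (C := fun N => M.quotM N ∈ X.1 → M.quotM N ∈ (sSup S).1 → M.quotM N ∈ Z.1) N ?_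
    intro N ih hQX hQS
    by_cases hQ : Subsingleton ((M.quotM N).carrier)
    · exact tc_zero Z.2 hQ
    · haveI : Nontrivial ((M.quotM N).carrier) := not_subsingleton_iff_nontrivial.mp hQ
      obtain ⟨Y, hY, P, f, hP, hfi, hPnt⟩ :=
        sSup_le_VT hN S hQS (M.quotM N) LinearMap.id Function.surjective_id inferInstance
      have hRne : LinearMap.range f ≠ ⊥ := by
        intro hbot
        obtain ⟨p, p', hpp⟩ := hPnt
        apply hpp
        apply hfi
        have h1 : f p ∈ LinearMap.range f := LinearMap.mem_range_self _ _
        have h2 : f p' ∈ LinearMap.range f := LinearMap.mem_range_self _ _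
        rw [hbot, Submodule.mem_bot] at h1 h2
        rw [h1, h2]
      set Rf := LinearMap.range f with hRf
      set N' := Submodule.comap N.mkQ Rf with hN'def
      have hle : N ≤ N' := by
        intro x hx
        show N.mkQ x ∈ Rf
        have : N.mkQ x = 0 := (Submodule.Quotient.mk_eq_zero N).2 hx
        rw [this]; exact zero_mem _
      have hmap : Submodule.map N.mkQ N' = Rf :=
        Submodule.map_comap_eq_of_surjective (Submodule.mkQ_surjective N) Rf
      have hlt : N < N' := by
        refine lt_of_le_of_ne hle fun hEq => hRne ?_
        rw [← hmap, ← hEq]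
        refine le_antisymm ?_ bot_le
        rintro y ⟨x, hx, rfl⟩
        exact (Submodule.Quotient.mk_eq_zero N).2 hx
      set g := Submodule.mapQ N N' LinearMap.id hle with hgdef
      have hgs : Function.Surjective g := by
        intro y; obtain ⟨x, rfl⟩ := Submodule.mkQ_surjective N' y
        exact ⟨N.mkQ x, by simp [hgdef, Submodule.mapQ_apply]⟩
      have hker : LinearMap.ker g = Rf := by
        ext y
        obtain ⟨x, rfl⟩ := Submodule.mkQ_surjective N y
        have : g (N.mkQ x) = N'.mkQ x := by simp [hgdef, Submodule.mapQ_apply]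
        rw [LinearMap.mem_ker, this]
        rw [show (N'.mkQ x = 0) ↔ x ∈ N' from Submodule.Quotient.mk_eq_zero N']
        exact Iff.rfl
      haveI := hN (M.quotM N)
      have hsub : (M.quotM N).subM Rf ∈ Y.1 :=
        tc_quot Y.2 hP f.rangeRestrict (LinearMap.surjective_rangeRestrict f)
      have hq'X : M.quotM N' ∈ X.1 := tc_quot X.2 hQX g hgs
      have hq'S : M.quotM N' ∈ (sSup S).1 := tc_quot (sSup S).2 hQS g hgs
      have hq'Y : M.quotM N' ∈ Y.1 := hZY Y hY (ih N' hlt hq'X hq'S)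
      have hmem : M.quotM N ∈ Y.1 :=
        Y.2.2.2 ((M.quotM N).subM Rf) (M.quotM N) (M.quotM N') Rf.subtype g
          (Submodule.injective_subtype Rf) hgs
          (by rw [Submodule.range_subtype, hker]) hsub hq'Y
      have hmem2 : M.quotM N ∈ (X ⊓ Y).1 := by
        rw [Tors.inf_carrier]; exact ⟨hQX, hmem⟩
      rwa [h Y hY] at hmem2
  exact (tc_mem_quotM_bot Z.2).1
    (key ⊥ ((tc_mem_quotM_bot X.2).2 hMX) ((tc_mem_quotM_bot (sSup S).2).2 hMS))

end VTors
section VTorf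

variable {A : Type} [Ring A]

/-- The class of modules all of whose nonzero submodules have a nonzero quotient
belonging to some member of `S`. -/
def VF (S : Set (Torf A)) : Set (ModA A) :=
  {M | ∀ (P : ModA A) (f : P.carrier →ₗ[Aᵐᵒᵖ] M.carrier), Function.Injective f →
    Nontrivial P.carrier →
    ∃ F ∈ S, ∃ (Q : ModA A) (g : P.carrier →ₗ[Aᵐᵒᵖ] Q.carrier),
      Q ∈ F.1 ∧ Function.Surjective g ∧ Nontrivial Q.carrier}

theorem isTorsionFreeClass_VF (hN : ∀ M : ModA A, IsNoetherian Aᵐᵒᵖ M.carrier)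
    (S : Set (Torf A)) : IsTorsionFreeClass (VF S) := by
  refine ⟨?_, ?_, ?_⟩
  · intro M hM P f hf hP
    obtain ⟨p, p', hpp⟩ := hP
    exact absurd (hf (@Subsingleton.elim _ hM (f p) (f p'))) hpp
  · intro M N hM ι hι P f hf hP
    exact hM P (ι.comp f) (hι.comp hf) hP
  · intro Xm Mm Zm a g ha hg he hX hZ P f hf hP
    by_cases hL : LinearMap.range (g.comp f) = ⊥
    · have hrange : LinearMap.range f ≤ LinearMap.range a := by
        rw [he]
        rintro x ⟨p, rfl⟩
        show g (f p) = 0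
        have h0 : (g.comp f) p ∈ LinearMap.range (g.comp f) := LinearMap.mem_range_self _ p
        rw [hL, Submodule.mem_bot] at h0
        simpa using h0
      have hcomp := SD15.factorInj_comp a ha f hrange
      have hfi' : Function.Injective (SD15.factorInj a ha f hrange) := by
        intro p p' hpq
        apply hf
        have e1 := LinearMap.congr_fun hcomp p
        have e2 := LinearMap.congr_fun hcomp p'
        rw [← e1, ← e2, LinearMap.comp_apply, LinearMap.comp_apply, hpq]
      exact hX P (SD15.factorInj a ha f hrange) hfi' hP
    · haveI := hN Zm
      haveI hnt : Nontrivial ↥(LinearMap.range (g.comp f)) :=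
        Submodule.nontrivial_iff_ne_bot.2 hL
      obtain ⟨F, hF, Q, q, hQ, hqs, hQnt⟩ := hZ (Zm.subM (LinearMap.range (g.comp f)))
        ((LinearMap.range (g.comp f)).subtype) (Submodule.injective_subtype _) hnt
      exact ⟨F, hF, Q, q.comp (g.comp f).rangeRestrict, hQ,
        hqs.comp (LinearMap.surjective_rangeRestrict _), hQnt⟩

theorem sSup_le_VF (hN : ∀ M : ModA A, IsNoetherian Aᵐᵒᵖ M.carrier)
    (S : Set (Torf A)) : (sSup S).1 ⊆ VF S := by
  have h : sSup S ≤ (⟨VF S, isTorsionFreeClass_VF hN S⟩ : Torf A) := by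
    refine sSup_le fun F hF => ?_
    refine Torf.le_iff.2 ?_
    intro M hM P f hf hP
    exact ⟨F, hF, P, LinearMap.id, tfc_sub F.2 hM f hf, Function.surjective_id, hP⟩
  exact h

/-- Meet-semidistributivity of `torf A`. -/
theorem torf_inf_sd (hN : ∀ M : ModA A, IsNoetherian Aᵐᵒᵖ M.carrier)
    (hA : ∀ M : ModA A, IsArtinian Aᵐᵒᵖ M.carrier)
    (X Z : Torf A) (S : Set (Torf A)) (hne : S.Nonempty)
    (h : ∀ F ∈ S, X ⊓ F = Z) : X ⊓ sSup S = Z := by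
  obtain ⟨F₀, hF₀⟩ := hne
  have hZF : ∀ F ∈ S, Z ≤ F := fun F hF => (h F hF) ▸ inf_le_right
  refine le_antisymm ?_ (le_inf ((h F₀ hF₀) ▸ inf_le_left) ((hZF F₀ hF₀).trans (le_sSup hF₀)))
  rw [Torf.le_iff, Torf.inf_carrier]
  rintro M ⟨hMX, hMS⟩
  haveI := hN M
  have wf : WellFounded ((· < ·) : Submodule Aᵐᵒᵖ M.carrier → Submodule Aᵐᵒᵖ M.carrier → Prop) :=
    (isArtinian_iff _ _).mp (hA M)
  have key : ∀ N : Submodule Aᵐᵒᵖ M.carrier,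
      M.subM N ∈ X.1 → M.subM N ∈ (sSup S).1 → M.subM N ∈ Z.1 := by
    intro N
    refine wf.induction
      (C := fun N => M.subM N ∈ X.1 → M.subM N ∈ (sSup S).1 → M.subM N ∈ Z.1) N ?_
    intro N ih hWX hWS
    by_cases hW : Subsingleton ((M.subM N).carrier)
    · exact tfc_zero Z.2 hW
    · haveI : Nontrivial ((M.subM N).carrier) := not_subsingleton_iff_nontrivial.mp hW
      obtain ⟨F, hF, Q, g, hQ, hgs, hQnt⟩ :=
        sSup_le_VF hN S hWS (M.subM N) LinearMap.id (fun a b hab => hab) inferInstance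
      have hkne : LinearMap.ker g ≠ ⊤ := by
        intro htop
        obtain ⟨y, y', hyy⟩ := hQnt
        obtain ⟨x, rfl⟩ := hgs y
        obtain ⟨x', rfl⟩ := hgs y'
        apply hyy
        have h1 : g x = 0 := by
          have : x ∈ LinearMap.ker g := htop ▸ Submodule.mem_top
          exact this
        have h2 : g x' = 0 := by
          have : x' ∈ LinearMap.ker g := htop ▸ Submodule.mem_top
          exact this
        rw [h1, h2]
      set N' := Submodule.map N.subtype (LinearMap.ker g) with hN'def
      have hle : N' ≤ N := by rintro x ⟨y, hy, rfl⟩; exact y.2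
      have hlt : N' < N := by
        refine lt_of_le_of_ne hle fun hEq => hkne ?_
        refine le_antisymm le_top ?_
        intro x _
        have hx1 : x.1 ∈ N' := by rw [hEq]; exact x.2
        obtain ⟨w, hw, hwx⟩ := hx1
        have : w = x := Subtype.ext hwx
        rwa [← this]
      have hιinj := Submodule.inclusion_injective hle
      have hsX : M.subM N' ∈ X.1 := tfc_sub X.2 hWX (Submodule.inclusion hle) hιinj
      have hsS : M.subM N' ∈ (sSup S).1 := tfc_sub (sSup S).2 hWS (Submodule.inclusion hle) hιinj
      have hsF : M.subM N' ∈ F.1 := hZF F hF (ih N' hlt hsX hsS)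
      have hre : LinearMap.range (Submodule.inclusion hle) = LinearMap.ker g := by
        ext x
        constructor
        · rintro ⟨y, rfl⟩
          obtain ⟨w, hw, hwy⟩ := y.2
          have : w = Submodule.inclusion hle y := Subtype.ext hwy
          rwa [← this]
        · intro hx
          refine ⟨⟨x.1, Submodule.mem_map_of_mem hx⟩, Subtype.ext rfl⟩
      have hmem : M.subM N ∈ F.1 :=
        F.2.2.2 (M.subM N') (M.subM N) Q (Submodule.inclusion hle) g hιinj hgs hre hsF hQ
      have hmem2 : M.subM N ∈ (X ⊓ F).1 := by
        rw [Torf.inf_carrier]; exact ⟨hWX, hmem⟩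
      rwa [h F hF] at hmem2
  have htop := key ⊤
    (tfc_sub X.2 hMX (⊤ : Submodule Aᵐᵒᵖ M.carrier).subtype (Submodule.injective_subtype _))
    (tfc_sub (sSup S).2 hMS (⊤ : Submodule Aᵐᵒᵖ M.carrier).subtype (Submodule.injective_subtype _))
  exact tfc_sub Z.2 htop (Submodule.topEquiv.symm.toLinearMap) Submodule.topEquiv.symm.injective

end VTorf
section Perp

variable {A : Type} [Ring A]

theorem isTorsionFreeClass_rightPerp (C : Set (ModA A)) : IsTorsionFreeClass (rightPerp C) := by
  refine ⟨?_, ?_, ?_⟩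
  · intro M hM W hW f
    exact LinearMap.ext fun x => @Subsingleton.elim _ hM _ _
  · intro M N hM ι hι W hW f
    have h0 : ι.comp f = 0 := hM W hW (ι.comp f)
    ext w
    apply hι
    have := LinearMap.congr_fun h0 w
    simpa using this
  · intro Xm Ym Zm a g ha hg he hX hZ W hW f
    have hz : g.comp f = 0 := hZ W hW (g.comp f)
    have hrange : LinearMap.range f ≤ LinearMap.range a := by
      rw [he]
      rintro x ⟨w, rfl⟩
      show g (f w) = 0
      have := LinearMap.congr_fun hz w
      simpa using this
    have hcomp := SD15.factorInj_comp a ha f hrange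
    rw [hX W hW (SD15.factorInj a ha f hrange), LinearMap.comp_zero] at hcomp
    exact hcomp.symm

theorem isTorsionClass_leftPerp (C : Set (ModA A)) : IsTorsionClass (leftPerp C) := by
  refine ⟨?_, ?_, ?_⟩
  · intro M hM W hW f
    exact LinearMap.ext fun x => by rw [@Subsingleton.elim _ hM x 0, map_zero]; simp
  · intro M N hM s hs W hW f
    have h0 : f.comp s = 0 := hM W hW (f.comp s)
    ext n
    obtain ⟨x, rfl⟩ := hs n
    have := LinearMap.congr_fun h0 x
    simpa using this
  · intro Xm Ym Zm a g ha hg he hX hZ W hW f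
    have hx : f.comp a = 0 := hX W hW (f.comp a)
    have hker : LinearMap.ker g ≤ LinearMap.ker f := by
      intro x hxk
      have hxr : x ∈ LinearMap.range a := he ▸ hxk
      obtain ⟨y, rfl⟩ := hxr
      have := LinearMap.congr_fun hx y
      simpa using this
    have hcomp := SD15.factorSurj_comp g hg f hker
    rw [hZ W hW (SD15.factorSurj g hg f hker), LinearMap.zero_comp] at hcomp
    exact hcomp.symm

theorem perp_galois {C D : Set (ModA A)} : C ⊆ leftPerp D ↔ D ⊆ rightPerp C := by
  constructor
  · intro h M hM N hN f
    exact h hN M hM f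
  · intro h N hN M hM f
    exact h hM N hN f

theorem rightPerp_antitone {C D : Set (ModA A)} (h : C ⊆ D) : rightPerp D ⊆ rightPerp C :=
  fun M hM N hN f => hM N (h hN) f

theorem leftPerp_antitone {C D : Set (ModA A)} (h : C ⊆ D) : leftPerp D ⊆ leftPerp C :=
  fun M hM N hN f => hM N (h hN) f

end Perp
section Reflexivity

variable {A : Type} [Ring A]

/-- For a torsion class `T`, `^⊥(T^⊥) = T`. -/
theorem leftPerp_rightPerp_eq (hN : ∀ M : ModA A, IsNoetherian Aᵐᵒᵖ M.carrier)
    {T : Set (ModA A)} (hT : IsTorsionClass T) : leftPerp (rightPerp T) = T := by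
  apply Set.Subset.antisymm
  · intro M hM
    haveI := hN M
    set tset : Set (Submodule Aᵐᵒᵖ M.carrier) := {N | M.subM N ∈ T} with htset
    have hbot : (⊥ : Submodule Aᵐᵒᵖ M.carrier) ∈ tset := by
      refine tc_zero hT ?_
      show Subsingleton ↥(⊥ : Submodule Aᵐᵒᵖ M.carrier)
      infer_instance
    -- tset is closed under sup
    have hsup : ∀ N₁ ∈ tset, ∀ N₂ ∈ tset, N₁ ⊔ N₂ ∈ tset := by
      intro N₁ h₁ N₂ h₂
      have hprod : (M.subM N₁).prodM (M.subM N₂) ∈ T := by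
        refine hT.2.2 (M.subM N₁) ((M.subM N₁).prodM (M.subM N₂)) (M.subM N₂)
          (LinearMap.inl Aᵐᵒᵖ _ _) (LinearMap.snd Aᵐᵒᵖ _ _) LinearMap.inl_injective
          (fun y => ⟨(0, y), rfl⟩) (LinearMap.range_inl Aᵐᵒᵖ _ _) h₁ h₂
      set φ : ((M.subM N₁).prodM (M.subM N₂)).carrier →ₗ[Aᵐᵒᵖ] (M.subM (N₁ ⊔ N₂)).carrier :=
        (Submodule.inclusion (le_sup_left : N₁ ≤ N₁ ⊔ N₂)).comp (LinearMap.fst Aᵐᵒᵖ _ _) +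
        (Submodule.inclusion (le_sup_right : N₂ ≤ N₁ ⊔ N₂)).comp (LinearMap.snd Aᵐᵒᵖ _ _)
        with hφ
      refine tc_quot hT hprod φ ?_
      rintro ⟨x, hx⟩
      rw [Submodule.mem_sup] at hx
      obtain ⟨y, hy, z, hz, rfl⟩ := hx
      exact ⟨(⟨y, hy⟩, ⟨z, hz⟩), Subtype.ext rfl⟩
    -- maximal element
    obtain ⟨t, htmem, htmax⟩ := WellFounded.has_min (IsNoetherian.wf inferInstance) tset ⟨⊥, hbot⟩
    have hgreat : ∀ N ∈ tset, N ≤ t := by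
      intro N hNm
      have hm := hsup N hNm t htmem
      have heq : N ⊔ t = t := by
        by_contra hne
        exact htmax (N ⊔ t) hm (lt_of_le_of_ne le_sup_right (Ne.symm hne))
      exact le_trans le_sup_left (le_of_eq heq)
    -- the quotient is in rightPerp T
    have hqperp : M.quotM t ∈ rightPerp T := by
      intro W hW f
      set P := Submodule.comap t.mkQ (LinearMap.range f) with hPdef
      have hle : t ≤ P := by
        intro x hx
        show t.mkQ x ∈ LinearMap.range f
        have h0 : t.mkQ x = 0 := (Submodule.Quotient.mk_eq_zero t).2 hx
        rw [h0]
        exact zero_mem _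
      set ρ : (M.subM P).carrier →ₗ[Aᵐᵒᵖ] ((M.quotM t).subM (LinearMap.range f)).carrier :=
        (t.mkQ.comp P.subtype).codRestrict (LinearMap.range f) (fun p => p.2) with hρ
      have hρs : Function.Surjective ρ := by
        rintro ⟨y, hy⟩
        obtain ⟨x, rfl⟩ := Submodule.mkQ_surjective t y
        exact ⟨⟨x, hy⟩, Subtype.ext rfl⟩
      have hkerρ : LinearMap.range (Submodule.inclusion hle) = LinearMap.ker ρ := by
        rw [Submodule.range_inclusion]
        ext p
        constructor
        · intro hp
          have h0 : t.mkQ p.1 = 0 := (Submodule.Quotient.mk_eq_zero t).2 hp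
          exact Subtype.ext h0
        · intro hp
          have h0 : t.mkQ p.1 = 0 := congrArg Subtype.val hp
          exact (Submodule.Quotient.mk_eq_zero t).1 h0
      have hrange : ((M.quotM t).subM (LinearMap.range f)) ∈ T :=
        tc_quot hT hW f.rangeRestrict (LinearMap.surjective_rangeRestrict f)
      have hPmem : P ∈ tset :=
        hT.2.2 (M.subM t) (M.subM P) ((M.quotM t).subM (LinearMap.range f))
          (Submodule.inclusion hle) ρ (Submodule.inclusion_injective hle) hρs hkerρ htmem hrange
      have hPle : P ≤ t := hgreat P hPmem
      have hfbot : LinearMap.range f = ⊥ := by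
        have h1 : Submodule.map t.mkQ P = LinearMap.range f :=
          Submodule.map_comap_eq_of_surjective (Submodule.mkQ_surjective t) _
      
        rw [← h1]
        refine le_antisymm ?_ bot_le
        rintro y ⟨x, hx, rfl⟩
        exact (Submodule.Quotient.mk_eq_zero t).2 (hPle hx)
      exact LinearMap.range_eq_bot.1 hfbot
    -- conclude
    have hmk : t.mkQ = 0 := hM (M.quotM t) hqperp t.mkQ
    have htop : t = ⊤ := by
      rw [eq_top_iff]
      intro x _
      have h0 : t.mkQ x = 0 := by rw [hmk]; rfl
      exact (Submodule.Quotient.mk_eq_zero t).1 h0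
    refine tc_quot hT htmem t.subtype ?_
    intro x
    exact ⟨⟨x, htop ▸ Submodule.mem_top⟩, rfl⟩
  · intro M hM W hW f
    exact hW M hM f

end Reflexivity
section Reflexivity2

variable {A : Type} [Ring A]

/-- For a torsion-free class `F`, `(^⊥F)^⊥ = F`. -/
theorem rightPerp_leftPerp_eq (hN : ∀ M : ModA A, IsNoetherian Aᵐᵒᵖ M.carrier)
    (hA : ∀ M : ModA A, IsArtinian Aᵐᵒᵖ M.carrier)
    {F : Set (ModA A)} (hF : IsTorsionFreeClass F) : rightPerp (leftPerp F) = F := by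
  apply Set.Subset.antisymm
  · intro M hM
    haveI := hN M
    set fset : Set (Submodule Aᵐᵒᵖ M.carrier) := {N | M.quotM N ∈ F} with hfset
    have htopm : (⊤ : Submodule Aᵐᵒᵖ M.carrier) ∈ fset := by
      refine tfc_zero hF ?_
      show Subsingleton (M.carrier ⧸ (⊤ : Submodule Aᵐᵒᵖ M.carrier))
      exact Submodule.Quotient.subsingleton_iff.mpr rfl
    -- fset is closed under inf
    have hinf : ∀ N₁ ∈ fset, ∀ N₂ ∈ fset, N₁ ⊓ N₂ ∈ fset := by
      intro N₁ h₁ N₂ h₂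
      have hprod : (M.quotM N₁).prodM (M.quotM N₂) ∈ F := by
        refine hF.2.2 (M.quotM N₁) ((M.quotM N₁).prodM (M.quotM N₂)) (M.quotM N₂)
          (LinearMap.inl Aᵐᵒᵖ _ _) (LinearMap.snd Aᵐᵒᵖ _ _) LinearMap.inl_injective
          (fun y => ⟨(0, y), rfl⟩) (LinearMap.range_inl Aᵐᵒᵖ _ _) h₁ h₂
      set ψ : (M.quotM (N₁ ⊓ N₂)).carrier →ₗ[Aᵐᵒᵖ] ((M.quotM N₁).prodM (M.quotM N₂)).carrier :=
        LinearMap.prod (Submodule.mapQ (N₁ ⊓ N₂) N₁ LinearMap.id inf_le_left)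
          (Submodule.mapQ (N₁ ⊓ N₂) N₂ LinearMap.id inf_le_right) with hψ
      refine tfc_sub hF hprod ψ ?_
      intro u v huv
      obtain ⟨x, rfl⟩ := Submodule.mkQ_surjective (N₁ ⊓ N₂) u
      obtain ⟨y, rfl⟩ := Submodule.mkQ_surjective (N₁ ⊓ N₂) v
      have h1 : N₁.mkQ x = N₁.mkQ y := by
        have := congrArg Prod.fst huv
        simpa [hψ, Submodule.mapQ_apply] using this
      have h2 : N₂.mkQ x = N₂.mkQ y := by
        have := congrArg Prod.snd huv
        simpa [hψ, Submodule.mapQ_apply] using this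
      have hx1 : x - y ∈ N₁ := (Submodule.Quotient.eq N₁).mp h1
      have hx2 : x - y ∈ N₂ := (Submodule.Quotient.eq N₂).mp h2
      exact (Submodule.Quotient.eq (N₁ ⊓ N₂)).mpr ⟨hx1, hx2⟩
    -- minimal element
    obtain ⟨n₀, hn₀mem, hn₀min⟩ :=
      WellFounded.has_min ((isArtinian_iff _ _).mp (hA M)) fset ⟨⊤, htopm⟩
    have hleast : ∀ N ∈ fset, n₀ ≤ N := by
      intro N hNm
      have hm := hinf n₀ hn₀mem N hNm
      have heq : n₀ ⊓ N = n₀ := by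
        by_contra hne
        exact hn₀min (n₀ ⊓ N) hm (lt_of_le_of_ne inf_le_left hne)
      exact le_trans (le_of_eq heq.symm) inf_le_right
    -- the submodule is in leftPerp F
    have hsperp : M.subM n₀ ∈ leftPerp F := by
      intro U hU h
      set K' := Submodule.map n₀.subtype (LinearMap.ker h) with hK'def
      have hK'le : K' ≤ n₀ := by rintro x ⟨y, hy, rfl⟩; exact y.2
      set j : ((M.subM n₀).quotM (LinearMap.ker h)).carrier →ₗ[Aᵐᵒᵖ] (M.quotM K').carrier :=
        Submodule.mapQ (LinearMap.ker h) K' n₀.subtype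
          (fun x hx => Submodule.mem_map_of_mem hx) with hj
      have hjinj : Function.Injective j := by
        intro u v huv
        obtain ⟨x, rfl⟩ := Submodule.mkQ_surjective (LinearMap.ker h) u
        obtain ⟨y, rfl⟩ := Submodule.mkQ_surjective (LinearMap.ker h) v
        have h1 : K'.mkQ x.1 = K'.mkQ y.1 := by
          simpa [hj, Submodule.mapQ_apply] using huv
        have h2 : x.1 - y.1 ∈ K' := (Submodule.Quotient.eq K').mp h1
        obtain ⟨w, hw, hwx⟩ := h2
        have hxy : w = x - y := Subtype.ext hwx
        rw [hxy] at hw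
        exact (Submodule.Quotient.eq (LinearMap.ker h)).mpr hw
      set s : (M.quotM K').carrier →ₗ[Aᵐᵒᵖ] (M.quotM n₀).carrier :=
        Submodule.mapQ K' n₀ LinearMap.id hK'le with hs
      have hssurj : Function.Surjective s := by
        intro y
        obtain ⟨x, rfl⟩ := Submodule.mkQ_surjective n₀ y
        exact ⟨K'.mkQ x, by simp [hs, Submodule.mapQ_apply]⟩
      have hexact : LinearMap.range j = LinearMap.ker s := by
        ext u
        constructor
        · rintro ⟨v, rfl⟩
          obtain ⟨w, rfl⟩ := Submodule.mkQ_surjective (LinearMap.ker h) v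
          have : s (j ((LinearMap.ker h).mkQ w)) = n₀.mkQ w.1 := by
            simp [hj, hs, Submodule.mapQ_apply]
          rw [LinearMap.mem_ker, this]
          exact (Submodule.Quotient.mk_eq_zero n₀).2 w.2
        · intro hu
          obtain ⟨x, rfl⟩ := Submodule.mkQ_surjective K' u
          rw [LinearMap.mem_ker] at hu
          have hx : x ∈ n₀ := by
            have : s (K'.mkQ x) = n₀.mkQ x := by simp [hs, Submodule.mapQ_apply]
            rw [this] at hu
            exact (Submodule.Quotient.mk_eq_zero n₀).1 hu
          exact ⟨(LinearMap.ker h).mkQ ⟨x, hx⟩, by simp [hj, Submodule.mapQ_apply]⟩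
      have hXmem : (M.subM n₀).quotM (LinearMap.ker h) ∈ F := by
        refine tfc_sub hF hU
          ((LinearMap.range h).subtype.comp h.quotKerEquivRange.toLinearMap) ?_
        exact (Submodule.injective_subtype _).comp h.quotKerEquivRange.injective
      have hK'mem : K' ∈ fset :=
        hF.2.2 ((M.subM n₀).quotM (LinearMap.ker h)) (M.quotM K') (M.quotM n₀)
          j s hjinj hssurj hexact hXmem hn₀mem
      have hker_top : LinearMap.ker h = ⊤ := by
        rw [eq_top_iff]
        intro x _
        have hx : x.1 ∈ K' := hleast K' hK'mem x.2
        obtain ⟨w, hw, hwx⟩ := hx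
        have : w = x := Subtype.ext hwx
        rwa [← this]
      exact LinearMap.ker_eq_top.1 hker_top
    -- conclude
    have hsub0 : n₀.subtype = 0 := hM (M.subM n₀) hsperp n₀.subtype
    have hbot : n₀ = ⊥ := by
      rw [eq_bot_iff]
      intro x hx
      have h0 : n₀.subtype ⟨x, hx⟩ = 0 := by rw [hsub0]; rfl
      simpa using h0
    rw [hbot] at hn₀mem
    exact tfc_mem_quotM_bot hF hn₀mem
  · intro M hM W hW f
    exact hW M hM f

end Reflexivity2
section Duality

variable {A : Type} [Ring A]

/-- The anti-isomorphism `tors A → torf A`. -/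
def PhiTT (T : Tors A) : Torf A := ⟨rightPerp T.1, isTorsionFreeClass_rightPerp T.1⟩

/-- The anti-isomorphism `torf A → tors A`. -/
def PsiTT (F : Torf A) : Tors A := ⟨leftPerp F.1, isTorsionClass_leftPerp F.1⟩

theorem PhiTT_antitone {T T' : Tors A} (h : T ≤ T') : PhiTT T' ≤ PhiTT T :=
  rightPerp_antitone h

theorem PsiTT_antitone {F F' : Torf A} (h : F ≤ F') : PsiTT F' ≤ PsiTT F :=
  leftPerp_antitone h

theorem PsiTT_PhiTT (hN : ∀ M : ModA A, IsNoetherian Aᵐᵒᵖ M.carrier) (T : Tors A) :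
    PsiTT (PhiTT T) = T := Subtype.ext (leftPerp_rightPerp_eq hN T.2)

theorem PhiTT_PsiTT (hN : ∀ M : ModA A, IsNoetherian Aᵐᵒᵖ M.carrier)
    (hA : ∀ M : ModA A, IsArtinian Aᵐᵒᵖ M.carrier) (F : Torf A) :
    PhiTT (PsiTT F) = F := Subtype.ext (rightPerp_leftPerp_eq hN hA F.2)

theorem PhiTT_sSup (S : Set (Tors A)) : PhiTT (sSup S) = sInf (PhiTT '' S) := by
  apply le_antisymm
  · exact le_sInf (by rintro _ ⟨Y, hY, rfl⟩; exact PhiTT_antitone (le_sSup hY))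
  · have hW : ∀ Y ∈ S, Y ≤ PsiTT (sInf (PhiTT '' S)) := by
      intro Y hY
      have h1 : sInf (PhiTT '' S) ≤ PhiTT Y := sInf_le ⟨Y, hY, rfl⟩
      exact perp_galois.2 h1
    have h2 : sSup S ≤ PsiTT (sInf (PhiTT '' S)) := sSup_le hW
    exact perp_galois.1 h2
  
theorem PhiTT_sInf (hN : ∀ M : ModA A, IsNoetherian Aᵐᵒᵖ M.carrier)
    (hA : ∀ M : ModA A, IsArtinian Aᵐᵒᵖ M.carrier) (S : Set (Tors A)) :
    PhiTT (sInf S) = sSup (PhiTT '' S) := by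
  apply le_antisymm
  · have h1 : PsiTT (sSup (PhiTT '' S)) ≤ sInf S := by
      refine le_sInf fun Y hY => ?_
      have h2 : PhiTT Y ≤ sSup (PhiTT '' S) := le_sSup ⟨Y, hY, rfl⟩
      have h3 := PsiTT_antitone h2
      rwa [PsiTT_PhiTT hN] at h3
    have h4 := PhiTT_antitone h1
    rwa [PhiTT_PsiTT hN hA] at h4
  · exact sSup_le (by rintro _ ⟨Y, hY, rfl⟩; exact PhiTT_antitone (sInf_le hY))

theorem PhiTT_sup (X Y : Tors A) : PhiTT (X ⊔ Y) = PhiTT X ⊓ PhiTT Y := by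
  rw [← sSup_pair, PhiTT_sSup, Set.image_pair, sInf_pair]

end Duality
/-- `tors A` is completely semidistributive. -/
theorem stmt15 (K A : Type) [Field K] [IsAlgClosed K] [Ring A] [Algebra K A]
    [FiniteDimensional K A] :
    (∀ (X Z : Tors A) (S : Set (Tors A)), S.Nonempty →
      (∀ Y ∈ S, X ⊔ Y = Z) → X ⊔ sInf S = Z) ∧
    (∀ (X Z : Tors A) (S : Set (Tors A)), S.Nonempty →
      (∀ Y ∈ S, X ⊓ Y = Z) → X ⊓ sSup S = Z) := by
  have hN : ∀ M : ModA A, IsNoetherian Aᵐᵒᵖ M.carrier := modA_isNoetherian K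
  have hA : ∀ M : ModA A, IsArtinian Aᵐᵒᵖ M.carrier := modA_isArtinian K
  constructor
  · intro X Z S hne h
    have h' : ∀ F ∈ PhiTT '' S, PhiTT X ⊓ F = PhiTT Z := by
      rintro _ ⟨Y, hY, rfl⟩
      rw [← PhiTT_sup X Y, h Y hY]
    have hsd := torf_inf_sd hN hA (PhiTT X) (PhiTT Z) (PhiTT '' S) (hne.image PhiTT) h'
    rw [← PhiTT_sInf hN hA S, ← PhiTT_sup X (sInf S)] at hsd
    have hfin := congrArg PsiTT hsd
    rwa [PsiTT_PhiTT hN, PsiTT_PhiTT hN] at hfin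
  · intro X Z S hne h
    exact tors_inf_sd hN X Z S hne h
end Aux
end

section
/- If every brick in mod A is isomorphic to a simple A-module, then tors A is a finite set; in fact tors A has exactly 2^n elements, where n is the number of isomorphism classes of simple A-modules. -/
/-! Preamble: the category `mod A` of finite-dimensional right `A`-modules,
torsion(-free) classes, the complete lattice `tors A`, functorially finite
torsion classes, bricks, etc. -/

open Function

namespace Stmt17Aux

open JordanHolderLattice

variable {A : Type} [Ring A]

theorem mem_of_equiv {T : Set (ModA A)} (hT : IsTorsionClass T) {M N : ModA A} (hM : M ∈ T)
    (e : M.carrier ≃ₗ[Aᵐᵒᵖ] N.carrier) : N ∈ T :=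
  hT.2.1 M N hM e.toLinearMap e.surjective

/-- The torsion class associated to a set of iso-classes of simples. -/
def psiSet (Q : Set (Quotient (simpleIsoSetoid A))) : Set (ModA A) :=
  {M | ∀ (S : SimpleMod A) (f : M.carrier →ₗ[Aᵐᵒᵖ] S.1.carrier), Function.Surjective f →
    Quotient.mk (simpleIsoSetoid A) S ∈ Q}

/-- The set of iso-classes of simples belonging to a class of modules. -/
def phiSet (T : Set (ModA A)) : Set (Quotient (simpleIsoSetoid A)) :=
  {q | ∃ S : SimpleMod A, Quotient.mk (simpleIsoSetoid A) S = q ∧ S.1 ∈ T}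

theorem isTorsionClass_psiSet (Q : Set (Quotient (simpleIsoSetoid A))) :
    IsTorsionClass (psiSet Q) := by
  refine ⟨fun N hN S f hf => ?_, fun M N hM f hf S g hg => ?_,
    fun X Y Z f g hf hg he hX hZ S h hh => ?_⟩
  all_goals haveI := S.2
  · -- no surjection from a subsingleton onto a simple module
    haveI := hN
    haveI : Nontrivial S.1.carrier := IsSimpleModule.nontrivial Aᵐᵒᵖ S.1.carrier
    obtain ⟨a, b, hab⟩ := exists_pair_ne S.1.carrier
    obtain ⟨x, rfl⟩ := hf a
    obtain ⟨y, rfl⟩ := hf b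
    exact absurd (congrArg f (Subsingleton.elim x y)) hab
  · exact hM S (g.comp f) (hg.comp hf)
  · -- extension closure
    rcases eq_bot_or_eq_top (LinearMap.range (h.comp f)) with hr | hr
    · -- h kills the image of X, so it factors through Z
      have hle : LinearMap.ker g ≤ LinearMap.ker h := by
        rw [← he]
        rintro x ⟨y, rfl⟩
        have : h (f y) = 0 := by
          have : h.comp f y ∈ LinearMap.range (h.comp f) := LinearMap.mem_range_self _ y
          rw [hr] at this
          simpa using this
        simpa using this
      set h' : Z.carrier →ₗ[Aᵐᵒᵖ] S.1.carrier :=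
        ((LinearMap.ker g).liftQ h hle).comp (g.quotKerEquivOfSurjective hg).symm.toLinearMap
      have hh' : Function.Surjective h' := by
        intro s
        obtain ⟨y, rfl⟩ := hh s
        refine ⟨g y, ?_⟩
        have : (g.quotKerEquivOfSurjective hg).symm (g y)
            = Submodule.Quotient.mk (p := LinearMap.ker g) y := by
          apply (g.quotKerEquivOfSurjective hg).injective
          simp [LinearMap.quotKerEquivOfSurjective]
        simp only [h', LinearMap.comp_apply, LinearEquiv.coe_toLinearMap, this]
        simp [Submodule.liftQ_apply]
      exact hZ S h' hh'
    · exact hX S (h.comp f) (LinearMap.range_eq_top.mp hr)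

theorem phi_psi (Q : Set (Quotient (simpleIsoSetoid A))) : phiSet (psiSet Q) = Q := by
  ext q
  constructor
  · rintro ⟨S, rfl, hS⟩
    exact hS S LinearMap.id Function.surjective_id
  · intro hq
    refine ⟨q.out, q.out_eq, fun S' f hf => ?_⟩
    haveI := q.out.2
    haveI := q.out.2
    haveI := S'.2
    haveI : Nontrivial S'.1.carrier := IsSimpleModule.nontrivial Aᵐᵒᵖ S'.1.carrier
    have hf0 : f ≠ 0 := by
      rintro rfl
      obtain ⟨a, b, hab⟩ := exists_pair_ne S'.1.carrier
      obtain ⟨x, rfl⟩ := hf a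
      obtain ⟨y, rfl⟩ := hf b
      exact hab rfl
    have hker : LinearMap.ker f = ⊥ := by
      rcases eq_bot_or_eq_top (LinearMap.ker f) with h | h
      · exact h
      · exact absurd (LinearMap.ker_eq_top.mp h) hf0
    have : Function.Bijective f := ⟨LinearMap.ker_eq_bot.mp hker, hf⟩
    have : Quotient.mk (simpleIsoSetoid A) S' = Quotient.mk (simpleIsoSetoid A) q.out :=
      Quotient.sound ⟨(LinearEquiv.ofBijective f this).symm⟩
    rwa [this, q.out_eq]

end Stmt17Aux

namespace Stmt17Aux

variable {A : Type} [Ring A]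

/-- Key splitting lemma: if every brick is simple, then any extension of a simple by a
non-isomorphic simple admits a surjection onto its simple submodule. -/
theorem exists_surj_of_simple_ext [IsArtinianRing Aᵐᵒᵖ]
    (hb : ∀ B : ModA A, IsBrick B →
      ∃ S : ModA A, IsSimpleModule Aᵐᵒᵖ S.carrier ∧ Nonempty (B.carrier ≃ₗ[Aᵐᵒᵖ] S.carrier))
    (M : ModA A) (U : Submodule Aᵐᵒᵖ M.carrier)
    (hU : IsSimpleModule Aᵐᵒᵖ ↥U) (hQ : IsSimpleModule Aᵐᵒᵖ (M.carrier ⧸ U))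
    (hniso : IsEmpty (↥U ≃ₗ[Aᵐᵒᵖ] M.carrier ⧸ U)) :
    ∃ f : M.carrier →ₗ[Aᵐᵒᵖ] ↥U, Function.Surjective f := by
  haveI := hU; haveI := hQ
  by_contra hc
  push_neg at hc
  -- Step A : the submodule lattice of M is the chain ⊥ < U < ⊤
  have hA : ∀ W : Submodule Aᵐᵒᵖ M.carrier, W = ⊥ ∨ W = U ∨ W = ⊤ := by
    intro W
    have hWU : U ⊓ W = ⊥ ∨ U ⊓ W = U := by
      rcases eq_bot_or_eq_top (Submodule.comap U.subtype W) with h | h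
      · left; rw [← Submodule.map_comap_subtype, h, Submodule.map_bot]
      · right; rw [← Submodule.map_comap_subtype, h, Submodule.map_subtype_top]
    have hmap : ∀ V : Submodule Aᵐᵒᵖ M.carrier, Submodule.map U.mkQ V = ⊥ → V ≤ U := by
      intro V h x hx
      have h0 : U.mkQ x ∈ Submodule.map U.mkQ V := ⟨x, hx, rfl⟩
      rw [h] at h0
      have : U.mkQ x = 0 := by simpa using h0
      simpa [Submodule.mkQ_apply, Submodule.Quotient.mk_eq_zero] using this
    rcases hWU with hWU | hWU
    · by_cases hW : W = ⊥
      · exact Or.inl hW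
      exfalso
      have hrk2 : Submodule.map U.mkQ W = ⊤ := by
        rcases eq_bot_or_eq_top (Submodule.map U.mkQ W) with h | h
        · exact absurd ((inf_eq_right.mpr (hmap W h)).symm.trans hWU) hW
        · exact h
      have hsup : U ⊔ W = ⊤ := by
        have h2 := Submodule.comap_map_mkQ U W
        rw [hrk2] at h2
        simpa using h2.symm
      have hcompl : IsCompl U W := ⟨disjoint_iff.mpr hWU, codisjoint_iff.mpr hsup⟩
      exact hc (U.linearProjOfIsCompl W hcompl)
        (fun u => ⟨u.1, Submodule.linearProjOfIsCompl_apply_left hcompl u⟩)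
    · have hUW : U ≤ W := inf_eq_left.mp hWU
      rcases eq_bot_or_eq_top (Submodule.map U.mkQ W) with h | h
      · exact Or.inr (Or.inl (le_antisymm (hmap W h) hUW))
      · refine Or.inr (Or.inr ?_)
        have h2 := Submodule.comap_map_mkQ U W
        rw [h] at h2
        have : U ⊔ W = ⊤ := by simpa using h2.symm
        rwa [sup_eq_right.mpr hUW] at this
  -- Step B : nontriviality facts
  haveI : Nontrivial ↥U := IsSimpleModule.nontrivial Aᵐᵒᵖ ↥U
  obtain ⟨x, hx0⟩ := exists_ne (0 : ↥U)
  have hUbot : U ≠ ⊥ := by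
    intro h
    apply hx0
    have hx : (x : M.carrier) ∈ (⊥ : Submodule Aᵐᵒᵖ M.carrier) := h ▸ x.2
    exact Subtype.ext (by simpa using hx)
  have hUtop : U ≠ ⊤ := by
    intro h
    haveI : Nontrivial (M.carrier ⧸ U) := IsSimpleModule.nontrivial Aᵐᵒᵖ _
    exact not_subsingleton _ (Submodule.Quotient.subsingleton_iff.mpr h)
  haveI hMnt : Nontrivial M.carrier := ⟨x.1, 0, fun h => hx0 (Subtype.ext (by simpa using h))⟩
  haveI : IsArtinian Aᵐᵒᵖ M.carrier := isArtinian_of_fg_of_artinian'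
  -- Step C : M is a brick
  have hbrick : IsBrick M := by
    refine ⟨hMnt, fun f hf0 => ?_⟩
    have hker : LinearMap.ker f = ⊥ := by
      rcases hA (LinearMap.ker f) with h | h | h
      · exact h
      · exfalso
        have e1 : (M.carrier ⧸ U) ≃ₗ[Aᵐᵒᵖ] ↥(LinearMap.range f) :=
          (Submodule.quotEquivOfEq U (LinearMap.ker f) h.symm).trans f.quotKerEquivRange
        rcases hA (LinearMap.range f) with hr | hr | hr
        · exact hf0 (LinearMap.range_eq_bot.mp hr)
        · exact hniso.false
            (((LinearEquiv.ofEq _ _ hr.symm :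
                ↥U ≃ₗ[Aᵐᵒᵖ] ↥(LinearMap.range f))).trans e1.symm)
        · have e2 : (M.carrier ⧸ U) ≃ₗ[Aᵐᵒᵖ] M.carrier :=
            e1.trans ((LinearEquiv.ofEq _ _ hr).trans Submodule.topEquiv)
          haveI : IsSimpleModule Aᵐᵒᵖ M.carrier := IsSimpleModule.congr e2.symm
          rcases eq_bot_or_eq_top U with h' | h'
          · exact hUbot h'
          · exact hUtop h'
      · exact absurd (LinearMap.ker_eq_top.mp h) hf0
    have hinj : Function.Injective f := LinearMap.ker_eq_bot.mp hker
    exact ⟨hinj, IsArtinian.surjective_of_injective_endomorphism f hinj⟩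
  obtain ⟨S, hS, ⟨e⟩⟩ := hb M hbrick
  haveI := hS
  haveI : IsSimpleModule Aᵐᵒᵖ M.carrier := IsSimpleModule.congr e
  rcases eq_bot_or_eq_top U with h | h
  · exact hUbot h
  · exact hUtop h

end Stmt17Aux

namespace Stmt17Aux

variable {A : Type} [Ring A]

set_option maxHeartbeats 2000000 in
set_option synthInstance.maxHeartbeats 400000 in
theorem psi_phi [IsArtinianRing Aᵐᵒᵖ] [IsNoetherianRing Aᵐᵒᵖ]
    (hb : ∀ B : ModA A, IsBrick B →
      ∃ S : ModA A, IsSimpleModule Aᵐᵒᵖ S.carrier ∧ Nonempty (B.carrier ≃ₗ[Aᵐᵒᵖ] S.carrier))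
    {T : Set (ModA A)} (hT : IsTorsionClass T) :
    psiSet (phiSet T) = T := by
  ext M
  constructor
  · intro hM
    haveI : IsNoetherian Aᵐᵒᵖ M.carrier := isNoetherian_of_isNoetherianRing_of_finite _ _
    haveI : IsArtinian Aᵐᵒᵖ M.carrier := isArtinian_of_fg_of_artinian'
    set P := phiSet T with hP
    have claim : ∀ N : Submodule Aᵐᵒᵖ M.carrier,
        (∀ (S : SimpleMod A) (f : ↥N →ₗ[Aᵐᵒᵖ] S.1.carrier), Function.Surjective f →
          Quotient.mk (simpleIsoSetoid A) S ∈ P) → ModA.mk ↥N ∈ T := by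
      intro N
      induction N using WellFoundedLT.induction with
      | _ N IH =>
      intro hgood
      by_cases htriv : Subsingleton ↥N
      · exact hT.1 _ htriv
      haveI hnt : Nontrivial ↥N := not_subsingleton_iff_nontrivial.mp htriv
      haveI : IsArtinian Aᵐᵒᵖ ↥N := isArtinian_submodule' N
      -- find a maximal submodule W of ↥N
      obtain ⟨W, hW⟩ : ∃ W : Submodule Aᵐᵒᵖ ↥N, IsCoatom W := by
        rcases (IsCoatomic.eq_top_or_exists_le_coatom (⊥ : Submodule Aᵐᵒᵖ ↥N)) with h | ⟨W, hW, -⟩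
        · exfalso
          obtain ⟨y, hy⟩ := exists_ne (0 : ↥N)
          have : y ∈ (⊥ : Submodule Aᵐᵒᵖ ↥N) := h.symm ▸ Submodule.mem_top
          exact hy (by simpa using this)
        · exact ⟨W, hW⟩
      haveI hQs : IsSimpleModule Aᵐᵒᵖ (↥N ⧸ W) := isSimpleModule_iff_isCoatom.mpr hW
      set S0 : SimpleMod A := ⟨ModA.mk (↥N ⧸ W), hQs⟩ with hS0def
      -- S0 belongs to T
      have hS0T : S0.1 ∈ T := by
        obtain ⟨S', hS'eq, hS'T⟩ := hgood S0 W.mkQ (Submodule.mkQ_surjective W)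
        obtain ⟨e'⟩ := Quotient.exact hS'eq
        exact mem_of_equiv hT hS'T e'
      -- the maximal submodule, as a submodule of M
      set W' : Submodule Aᵐᵒᵖ M.carrier := Submodule.map N.subtype W with hW'def
      have eW : ↥W ≃ₗ[Aᵐᵒᵖ] ↥W' := Submodule.equivMapOfInjective N.subtype N.injective_subtype W
      have hlt : W' < N := by
        refine lt_of_le_of_ne (Submodule.map_subtype_le N W) (fun h => hW.1 ?_)
        apply Submodule.map_injective_of_injective N.injective_subtype
        rw [Submodule.map_subtype_top]
        exact h
      -- every simple quotient of W' has its class in P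
      have hgoodW' : ∀ (S : SimpleMod A) (f : ↥W' →ₗ[Aᵐᵒᵖ] S.1.carrier), Function.Surjective f →
          Quotient.mk (simpleIsoSetoid A) S ∈ P := by
        intro S f hf
        haveI := S.2
        set g : ↥W →ₗ[Aᵐᵒᵖ] S.1.carrier := f ∘ₗ eW.toLinearMap with hgdef
        have hg : Function.Surjective g := hf.comp eW.surjective
        set W₀ : Submodule Aᵐᵒᵖ ↥N := (LinearMap.ker g).map W.subtype with hW₀def
        have hle : W₀ ≤ W := Submodule.map_subtype_le W _
        set Umod : Submodule Aᵐᵒᵖ (↥N ⧸ W₀) := Submodule.map W₀.mkQ W with hUdef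
        set h : ↥W →ₗ[Aᵐᵒᵖ] (↥N ⧸ W₀) := W₀.mkQ ∘ₗ W.subtype with hhdef
        have hrange : LinearMap.range h = Umod := by
          rw [hhdef, LinearMap.range_comp, Submodule.range_subtype]
        have hkerh : LinearMap.ker h = LinearMap.ker g := by
          rw [hhdef, LinearMap.ker_comp, Submodule.ker_mkQ, hW₀def,
            Submodule.comap_map_eq_of_injective W.injective_subtype]
        have hkerh' : LinearMap.ker (h ∘ₗ eW.symm.toLinearMap) = LinearMap.ker f := by
          ext x
          simp only [LinearMap.mem_ker, LinearMap.comp_apply, LinearEquiv.coe_coe]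
          rw [← LinearMap.mem_ker, hkerh, LinearMap.mem_ker, hgdef, LinearMap.comp_apply,
            LinearEquiv.coe_coe, LinearEquiv.apply_symm_apply]
        have hrange' : LinearMap.range (h ∘ₗ eW.symm.toLinearMap) = Umod := by
          rw [LinearMap.range_comp, LinearEquiv.range, Submodule.map_top, hrange]
        have eU : ↥Umod ≃ₗ[Aᵐᵒᵖ] S.1.carrier :=
          (LinearEquiv.ofEq _ _ hrange'.symm).trans
            ((h ∘ₗ eW.symm.toLinearMap).quotKerEquivRange.symm.trans
              ((Submodule.quotEquivOfEq _ _ hkerh').trans (f.quotKerEquivOfSurjective hf)))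
        haveI hUsimple : IsSimpleModule Aᵐᵒᵖ ↥Umod := IsSimpleModule.congr eU
        have eQ : ((↥N ⧸ W₀) ⧸ Umod) ≃ₗ[Aᵐᵒᵖ] (↥N ⧸ W) :=
          Submodule.quotientQuotientEquivQuotient W₀ W hle
        haveI hQsimple : IsSimpleModule Aᵐᵒᵖ ((↥N ⧸ W₀) ⧸ Umod) := IsSimpleModule.congr eQ
        by_cases hiso : Nonempty (↥Umod ≃ₗ[Aᵐᵒᵖ] (↥N ⧸ W₀) ⧸ Umod)
        · have e3 : S.1.carrier ≃ₗ[Aᵐᵒᵖ] S0.1.carrier := eU.symm.trans (hiso.some.trans eQ)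
          have heq : Quotient.mk (simpleIsoSetoid A) S = Quotient.mk (simpleIsoSetoid A) S0 :=
            Quotient.sound ⟨e3⟩
          rw [heq, hP]
          exact ⟨S0, rfl, hS0T⟩
        · obtain ⟨p, hp⟩ := exists_surj_of_simple_ext hb (ModA.mk (↥N ⧸ W₀)) Umod hUsimple
            hQsimple (not_nonempty_iff.mp hiso)
          exact hgood S (eU.toLinearMap ∘ₗ p ∘ₗ W₀.mkQ)
            (eU.surjective.comp (hp.comp (Submodule.mkQ_surjective W₀)))
      have hW'T : ModA.mk ↥W' ∈ T := IH W' hlt hgoodW'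
      -- extension: 0 → W' → N → S0 → 0
      refine hT.2.2 (ModA.mk ↥W') (ModA.mk ↥N) S0.1
        (W.subtype ∘ₗ eW.symm.toLinearMap) W.mkQ
        (W.injective_subtype.comp eW.symm.injective) (Submodule.mkQ_surjective W) ?_ hW'T hS0T
      rw [LinearMap.range_comp, LinearEquiv.range, Submodule.map_subtype_top, Submodule.ker_mkQ]
    have hgoodtop : ∀ (S : SimpleMod A) (f : ↥(⊤ : Submodule Aᵐᵒᵖ M.carrier) →ₗ[Aᵐᵒᵖ] S.1.carrier),
        Function.Surjective f → Quotient.mk (simpleIsoSetoid A) S ∈ P := by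
      intro S f hf
      exact hM S (f ∘ₗ Submodule.topEquiv.symm.toLinearMap)
        (hf.comp Submodule.topEquiv.symm.surjective)
    exact mem_of_equiv hT (claim ⊤ hgoodtop) Submodule.topEquiv
  · intro hM S f hf
    exact ⟨S, rfl, hT.2.1 M S.1 hM f hf⟩

end Stmt17Aux

namespace Stmt17Aux

variable {A : Type} [Ring A]

theorem covBy_map_subtype {R M : Type*} [Ring R] [AddCommGroup M] [Module R M]
    (m : Submodule R M) {p q : Submodule R ↥m} (h : p ⋖ q) :
    p.map m.subtype ⋖ q.map m.subtype := by
  constructor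
  · exact Submodule.map_strictMono_of_injective m.injective_subtype h.1
  · intro z hz1 hz2
    have hzm : z ≤ m := hz2.le.trans
      (le_of_le_of_eq (LinearMap.map_le_range) (Submodule.range_subtype m))
    set z' := Submodule.comap m.subtype z with hz'
    have hmapz' : z'.map m.subtype = z := by
      rw [hz', Submodule.map_comap_subtype, inf_eq_right.mpr hzm]
    have h1 : p < z' := by
      refine lt_of_le_of_ne (Submodule.map_le_iff_le_comap.mp hz1.le) (fun hpz => ?_)
      rw [← hpz] at hmapz'
      exact hz1.ne hmapz'
    have h2 : z' < q := by
      refine lt_of_le_of_ne ?_ (fun hzq => ?_)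
      · rw [hz', ← Submodule.comap_map_eq_of_injective m.injective_subtype q]
        exact Submodule.comap_mono hz2.le
      · rw [hzq] at hmapz'
        exact hz2.ne hmapz'.symm
    exact h.2 h1 h2

set_option maxHeartbeats 1000000 in
theorem finite_simpleClasses [IsArtinianRing Aᵐᵒᵖ] [IsNoetherianRing Aᵐᵒᵖ] :
    Finite (Quotient (simpleIsoSetoid A)) := by
  obtain ⟨c, hcb, hct⟩ := exists_compositionSeries_of_isNoetherian_isArtinian Aᵐᵒᵖ Aᵐᵒᵖ
  have key : ∀ S : SimpleMod A, ∃ j : Fin c.length,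
      Nonempty ((↥(c (Fin.succ j)) ⧸
        Submodule.comap (c (Fin.succ j)).subtype (c (Fin.castSucc j))) ≃ₗ[Aᵐᵒᵖ] S.1.carrier) := by
    intro S
    haveI := S.2
    haveI : Nontrivial S.1.carrier := IsSimpleModule.nontrivial Aᵐᵒᵖ S.1.carrier
    obtain ⟨s, hs⟩ := exists_ne (0 : S.1.carrier)
    set φ : Aᵐᵒᵖ →ₗ[Aᵐᵒᵖ] S.1.carrier := LinearMap.toSpanSingleton Aᵐᵒᵖ _ s with hφdef
    have hφ : Function.Surjective φ := by
      rw [← LinearMap.range_eq_top]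
      rcases eq_bot_or_eq_top (LinearMap.range φ) with h | h
      · exfalso
        apply hs
        have : φ 1 ∈ LinearMap.range φ := LinearMap.mem_range_self φ 1
        rw [h] at this
        simpa [hφdef, LinearMap.toSpanSingleton_apply_one] using this
      · exact h
    set m := LinearMap.ker φ with hmdef
    have eS : (Aᵐᵒᵖ ⧸ m) ≃ₗ[Aᵐᵒᵖ] S.1.carrier := φ.quotKerEquivOfSurjective hφ
    have hm : IsCoatom m := isSimpleModule_iff_isCoatom.mp (IsSimpleModule.congr eS)
    haveI : IsArtinian Aᵐᵒᵖ ↥m := isArtinian_submodule' m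
    obtain ⟨d₀, hd₀b, hd₀t⟩ := exists_compositionSeries_of_isNoetherian_isArtinian Aᵐᵒᵖ ↥m
    set d₁ : CompositionSeries (Submodule Aᵐᵒᵖ Aᵐᵒᵖ) :=
      ⟨d₀.length, fun i => (d₀ i).map m.subtype, fun i => covBy_map_subtype m (d₀.step i)⟩
      with hd₁def
    have hd₁last : d₁.last = m := by
      show (d₀ (Fin.last _)).map m.subtype = m
      rw [show d₀ (Fin.last _) = ⊤ from hd₀t, Submodule.map_subtype_top]
    have hstep : JordanHolderLattice.IsMaximal d₁.last (⊤ : Submodule Aᵐᵒᵖ Aᵐᵒᵖ) := by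
      rw [hd₁last]
      exact covBy_top_iff.mpr hm
    set d := d₁.snoc ⊤ hstep with hddef
    have hdhead : d.head = ⊥ := by
      rw [hddef, RelSeries.head_snoc]
      show (d₀ 0).map m.subtype = ⊥
      rw [show d₀ 0 = ⊥ from hd₀b, Submodule.map_bot]
    have hdlast : d.last = ⊤ := RelSeries.last_snoc _ _ _
    obtain ⟨e, he⟩ := CompositionSeries.jordan_holder d c (hdhead.trans hcb.symm)
      (hdlast.trans hct.symm)
    set i : Fin d.length := Fin.last d₁.length with hidef
    have h1 : d (Fin.castSucc i) = m :=
      (RelSeries.snoc_castSucc d₁ ⊤ hstep (Fin.last d₁.length)).trans hd₁last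
    have h2 : d (Fin.succ i) = ⊤ := by
      exact hdlast
    have hiso := he i
    rw [h1, h2] at hiso
    have eiso := JordanHolderLattice.Iso.linearEquiv hiso
    have efac : ((⊤ : Submodule Aᵐᵒᵖ Aᵐᵒᵖ) ⧸
        Submodule.comap (⊤ : Submodule Aᵐᵒᵖ Aᵐᵒᵖ).subtype m) ≃ₗ[Aᵐᵒᵖ] S.1.carrier :=
      (Submodule.Quotient.equiv (Submodule.comap (⊤ : Submodule Aᵐᵒᵖ Aᵐᵒᵖ).subtype m) m
        Submodule.topEquiv (by ext x; simp)).trans eS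
    exact ⟨e i, ⟨eiso.symm.trans efac⟩⟩

  -- use `key` to build an injection into `Fin c.length`
  choose idx hidx using key
  have hinj : Function.Injective (fun q : Quotient (simpleIsoSetoid A) => idx q.out) := by
    intro q1 q2 h
    obtain ⟨e1⟩ := hidx q1.out
    obtain ⟨e2⟩ := hidx q2.out
    have h' : idx q1.out = idx q2.out := h
    rw [h'] at e1
    have : (simpleIsoSetoid A).r q1.out q2.out := ⟨e1.symm.trans e2⟩
    rw [← q1.out_eq, ← q2.out_eq]
    exact Quotient.sound this
  exact Finite.of_injective _ hinj

end Stmt17Aux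

/-- if every brick in `mod A` is isomorphic to a simple `A`-module, then
`tors A` is finite, of cardinality `2 ^ n` where `n` is the number of isomorphism
classes of simple `A`-modules. -/
theorem stmt17 (K A : Type) [Field K] [IsAlgClosed K] [Ring A] [Algebra K A]
    [FiniteDimensional K A]
    (hb : ∀ B : ModA A, IsBrick B →
      ∃ S : ModA A, IsSimpleModule Aᵐᵒᵖ S.carrier ∧ Nonempty (B.carrier ≃ₗ[Aᵐᵒᵖ] S.carrier)) :
    Finite (Tors A) ∧ Nat.card (Tors A) = 2 ^ numSimples A := by
  haveI : FiniteDimensional K Aᵐᵒᵖ := Module.Finite.equiv (MulOpposite.opLinearEquiv K)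
  haveI hart : IsArtinianRing Aᵐᵒᵖ := isArtinian_of_tower K inferInstance
  haveI hnoe : IsNoetherianRing Aᵐᵒᵖ := isNoetherian_of_tower K inferInstance
  let E : Tors A ≃ Set (Quotient (simpleIsoSetoid A)) :=
    { toFun := fun T => Stmt17Aux.phiSet T.1
      invFun := fun Q => ⟨Stmt17Aux.psiSet Q, Stmt17Aux.isTorsionClass_psiSet Q⟩
      left_inv := fun T => Subtype.ext (Stmt17Aux.psi_phi hb T.2)
      right_inv := fun Q => Stmt17Aux.phi_psi Q }
  haveI hfin : Finite (Quotient (simpleIsoSetoid A)) := Stmt17Aux.finite_simpleClasses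
  constructor
  · exact Finite.of_equiv _ E.symm
  · have h1 : Nat.card (Tors A) = Nat.card (Set (Quotient (simpleIsoSetoid A))) :=
      Nat.card_congr E
    have h2 : Nat.card (Set (Quotient (simpleIsoSetoid A)))
        = Nat.card Prop ^ Nat.card (Quotient (simpleIsoSetoid A)) := Nat.card_fun
    have h3 : Nat.card Prop = 2 := by
      rw [Nat.card_congr Equiv.propEquivBool, Nat.card_eq_fintype_card, Fintype.card_bool]
    rw [h1, h2, h3, numSimples]
end

section
/- A torsion class T covers the zero torsion class 0 in the lattice tors A if and only if T = T(S) for some simple A-module S; moreover T(S) = T(S') for simple modules S and S' if and only if S and S' are isomorphic. -/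
/-! Preamble: the category `mod A` of finite-dimensional right `A`-modules,
torsion(-free) classes, the complete lattice `tors A`, functorially finite
torsion classes, bricks, etc. -/

open Function

section Aux

variable {A : Type} [Ring A]

theorem mem_torsGen {C : Set (ModA A)} {M : ModA A} (hM : M ∈ C) : M ∈ (torsGen C).1 := by
  rintro t ⟨T, hT, rfl⟩
  exact hT hM

theorem torsGen_le {C : Set (ModA A)} {T : Tors A} (h : C ⊆ T.1) : torsGen C ≤ T :=
  sInf_le h

theorem torsGen_subset {C X : Set (ModA A)} (hX : IsTorsionClass X) (h : C ⊆ X) :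
    (torsGen C).1 ⊆ X :=
  torsGen_le (T := ⟨X, hX⟩) h

/-- The class of modules all of whose simple quotients are isomorphic to `S`. -/
def simpleQuotSet (S : ModA A) : Set (ModA A) :=
  {M | ∀ P : ModA A, IsSimpleModule Aᵐᵒᵖ P.carrier →
    ∀ g : M.carrier →ₗ[Aᵐᵒᵖ] P.carrier, Surjective g →
      Nonempty (P.carrier ≃ₗ[Aᵐᵒᵖ] S.carrier)}

theorem surj_to_simple {M P : Type} [AddCommGroup M] [Module Aᵐᵒᵖ M]
    [AddCommGroup P] [Module Aᵐᵒᵖ P] (hP : IsSimpleModule Aᵐᵒᵖ P)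
    (g : M →ₗ[Aᵐᵒᵖ] P) (hg : g ≠ 0) : Surjective g := by
  rcases hP.1.2 (LinearMap.range g) with h | h
  · exact absurd (LinearMap.range_eq_bot.mp h) hg
  · exact LinearMap.range_eq_top.mp h

theorem isTorsionClass_simpleQuotSet (S : ModA A) : IsTorsionClass (simpleQuotSet S) := by
  refine ⟨fun N hN P hP g hg => ?_, fun M N hM f hf P hP g hg => ?_,
    fun X Y Z f g hf hg he hX hZ P hP h hh => ?_⟩
  · haveI := hP
    haveI : Nontrivial P.carrier := IsSimpleModule.nontrivial Aᵐᵒᵖ P.carrier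
    haveI := hN
    exact absurd hg.subsingleton (not_subsingleton _)
  · exact hM P hP (g.comp f) (hg.comp hf)
  · by_cases hc : h.comp f = 0
    · have hle : LinearMap.ker g ≤ LinearMap.ker h := by
        rw [← he]
        rintro y ⟨x, rfl⟩
        exact congrFun (congrArg DFunLike.coe hc) x
      refine hZ P hP (((LinearMap.ker g).liftQ h hle).comp
        (g.quotKerEquivOfSurjective hg).symm.toLinearMap) ?_
      refine Surjective.comp (g := ((LinearMap.ker g).liftQ h hle)) ?_
        (g.quotKerEquivOfSurjective hg).symm.surjective
      intro p
      obtain ⟨y, rfl⟩ := hh p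
      exact ⟨Submodule.Quotient.mk y, rfl⟩
    · exact hX P hP (h.comp f) (surj_to_simple hP _ hc)

theorem self_mem_simpleQuotSet {S : ModA A} (hS : IsSimpleModule Aᵐᵒᵖ S.carrier) :
    S ∈ simpleQuotSet S := by
  intro P hP g hg
  haveI := hS
  haveI := hP
  haveI : Nontrivial P.carrier := IsSimpleModule.nontrivial Aᵐᵒᵖ P.carrier
  have hker : LinearMap.ker g = ⊥ := by
    rcases hS.1.2 (LinearMap.ker g) with h | h
    · exact h
    · have : g = 0 := by
        ext x
        exact (LinearMap.mem_ker).mp (h ▸ Submodule.mem_top)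
      rcases exists_pair_ne P.carrier with ⟨a, b, hab⟩
      obtain ⟨x, rfl⟩ := hg a
      obtain ⟨y, rfl⟩ := hg b
      simp [this] at hab
  exact ⟨(LinearEquiv.ofBijective g ⟨LinearMap.ker_eq_bot.mp hker, hg⟩).symm⟩

theorem torsGen_simple_subset {S : ModA A} (hS : IsSimpleModule Aᵐᵒᵖ S.carrier) :
    (torsGen {S}).1 ⊆ simpleQuotSet S :=
  torsGen_subset (isTorsionClass_simpleQuotSet S)
    (Set.singleton_subset_iff.mpr (self_mem_simpleQuotSet hS))

end Aux

section Aux2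

variable {K A : Type} [Field K] [Ring A] [Algebra K A] [FiniteDimensional K A]

theorem exists_simple_quot (K : Type) [Field K] [Algebra K A] [FiniteDimensional K A]
    (M : ModA A) (hM : Nontrivial M.carrier) :
    ∃ P : ModA A, IsSimpleModule Aᵐᵒᵖ P.carrier ∧
      ∃ g : M.carrier →ₗ[Aᵐᵒᵖ] P.carrier, Surjective g := by
  haveI := hM
  haveI : IsNoetherianRing Aᵐᵒᵖ := by
    have : IsNoetherian K Aᵐᵒᵖ := inferInstance
    exact isNoetherian_of_tower K inferInstance
  have h1 : IsNoetherian Aᵐᵒᵖ M.carrier := inferInstance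
  have h2 := isCoatomic_of_orderTop_gt_wellFounded (α := Submodule Aᵐᵒᵖ M.carrier) h1.wf
  obtain ⟨N, hN, -⟩ :
      ∃ N : Submodule Aᵐᵒᵖ M.carrier, IsCoatom N ∧ (⊥ : Submodule Aᵐᵒᵖ M.carrier) ≤ N := by
    rcases h2.eq_top_or_exists_le_coatom (⊥ : Submodule Aᵐᵒᵖ M.carrier) with h | h
    · exact absurd h bot_ne_top
    · exact h
  refine ⟨⟨M.carrier ⧸ N⟩, ?_, N.mkQ, Submodule.mkQ_surjective N⟩
  exact (isSimpleModule_iff_isCoatom (m := N)).mpr hN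

end Aux2

/-- a torsion class covers the zero torsion class `0` iff it is `T(S)`
for a simple module `S`; and `T(S) = T(S')` for simples `S, S'` iff `S ≅ S'`. -/
theorem stmt18 (K A : Type) [Field K] [IsAlgClosed K] [Ring A] [Algebra K A]
    [FiniteDimensional K A]
    (Z : Tors A) (hZ : Z.1 = {M : ModA A | Subsingleton M.carrier}) :
    (∀ T : Tors A, Z ⋖ T ↔
      ∃ S : ModA A, IsSimpleModule Aᵐᵒᵖ S.carrier ∧ T = torsGen {S}) ∧
    (∀ S S' : ModA A, IsSimpleModule Aᵐᵒᵖ S.carrier → IsSimpleModule Aᵐᵒᵖ S'.carrier →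
      (torsGen ({S} : Set (ModA A)) = torsGen {S'} ↔
        Nonempty (S.carrier ≃ₗ[Aᵐᵒᵖ] S'.carrier))) := by
  have hbot : ∀ T : Tors A, Z ≤ T := by
    intro T M hM
    have hM' : M ∈ Z.1 := hM
    rw [hZ] at hM'
    exact T.2.1 M hM'
  have hlt : ∀ {S : ModA A}, IsSimpleModule Aᵐᵒᵖ S.carrier → Z < torsGen {S} := by
    intro S hS
    refine lt_of_le_of_ne (hbot _) fun h => ?_
    have hSmem : S ∈ Z.1 := h ▸ mem_torsGen rfl
    rw [hZ] at hSmem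
    haveI : Nontrivial S.carrier := IsSimpleModule.nontrivial Aᵐᵒᵖ S.carrier
    exact (not_subsingleton S.carrier) hSmem
  have hnt : ∀ {U : Tors A}, Z < U → ∃ M ∈ U.1, Nontrivial M.carrier := by
    intro U hU
    by_contra h
    push_neg at h
    refine absurd (le_antisymm (fun M hM => ?_) hU.le).symm hU.ne
    show M ∈ Z.1
    rw [hZ]
    rcases subsingleton_or_nontrivial M.carrier with hs | hn
    · exact hs
    · exact absurd hn (not_nontrivial_iff_subsingleton.mpr (h M hM))
  have hSin : ∀ {S : ModA A} {U : Tors A}, IsSimpleModule Aᵐᵒᵖ S.carrier →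
      Z < U → U ≤ torsGen {S} → torsGen {S} ≤ U := by
    intro S U hS hZU hUle
    obtain ⟨M, hMU, hMnt⟩ := hnt hZU
    obtain ⟨P, hP, g, hg⟩ := exists_simple_quot K M hMnt
    have hPU : P ∈ U.1 := U.2.2.1 M P hMU g hg
    obtain ⟨e⟩ := torsGen_simple_subset hS (hUle hMU) P hP g hg
    have hSU : S ∈ U.1 := U.2.2.1 P S hPU e.toLinearMap e.surjective
    exact torsGen_le (Set.singleton_subset_iff.mpr hSU)
  constructor
  · intro T
    constructor
    · intro hcov
      obtain ⟨M, hMT, hMnt⟩ := hnt hcov.1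
      obtain ⟨P, hP, g, hg⟩ := exists_simple_quot K M hMnt
      have hPT : P ∈ T.1 := T.2.2.1 M P hMT g hg
      refine ⟨P, hP, ?_⟩
      have h2 : torsGen {P} ≤ T := torsGen_le (Set.singleton_subset_iff.mpr hPT)
      rcases h2.lt_or_eq with h | h
      · exact absurd h (hcov.2 (hlt hP))
      · exact h.symm
    · rintro ⟨S, hS, rfl⟩
      refine ⟨hlt hS, fun U hZU hUT => ?_⟩
      exact absurd (hSin hS hZU hUT.le) (not_le_of_gt hUT)
  · intro S S' hS hS'
    constructor
    · intro heq
      have h1 : S ∈ (torsGen {S'}).1 := heq ▸ mem_torsGen rfl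
      exact torsGen_simple_subset hS' h1 S hS LinearMap.id surjective_id
    · rintro ⟨e⟩
      have h1 : S ∈ (torsGen {S'}).1 :=
        (torsGen {S'}).2.2.1 S' S (mem_torsGen rfl) e.symm.toLinearMap e.symm.surjective
      have h2 : S' ∈ (torsGen {S}).1 :=
        (torsGen {S}).2.2.1 S S' (mem_torsGen rfl) e.toLinearMap e.surjective
      exact le_antisymm (torsGen_le (Set.singleton_subset_iff.mpr h1))
        (torsGen_le (Set.singleton_subset_iff.mpr h2))
end

section
/- If the complete lattice tors A is upper semimodular, then every torsion class T in mod A satisfies T = T(S_T), where S_T is the set of all simple A-modules contained in T; that is, every torsion class is generated by the simple modules it contains. -/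
/-! Preamble: the category `mod A` of finite-dimensional right `A`-modules,
torsion(-free) classes, the complete lattice `tors A`, functorially finite
torsion classes, bricks, etc. -/

open Function

/-! ### Development for Statement 19 -/

section Stmt19Dev

variable {A : Type} [Ring A]

/-- Inductive description of the torsion class generated by a class `C`. -/
inductive Gen (C : Set (ModA A)) : ModA A → Prop
  | base {M : ModA A} (h : M ∈ C) : Gen C M
  | zero (N : ModA A) (h : Subsingleton N.carrier) : Gen C N
  | quot {M N : ModA A} (hM : Gen C M) (f : M.carrier →ₗ[Aᵐᵒᵖ] N.carrier)
      (hf : Surjective f) : Gen C N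
  | ext {X Y Z : ModA A} (f : X.carrier →ₗ[Aᵐᵒᵖ] Y.carrier)
      (g : Y.carrier →ₗ[Aᵐᵒᵖ] Z.carrier) (hf : Injective f) (hg : Surjective g)
      (he : LinearMap.range f = LinearMap.ker g) (hX : Gen C X) (hZ : Gen C Z) : Gen C Y

theorem gen_isTorsionClass (C : Set (ModA A)) : IsTorsionClass {M : ModA A | Gen C M} :=
  ⟨fun N hN => Gen.zero N hN,
   fun _ N hM f hf => Gen.quot hM f hf,
   fun _ _ _ f g hf hg he hX hZ => Gen.ext f g hf hg he hX hZ⟩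

theorem Gen.mem_of {C : Set (ModA A)} {T : Set (ModA A)} (hT : IsTorsionClass T)
    (hC : C ⊆ T) : ∀ {M : ModA A}, Gen C M → M ∈ T := by
  intro M hM
  induction hM with
  | base h => exact hC h
  | zero N h => exact hT.1 N h
  | quot hM f hf ih => exact hT.2.1 _ _ ih f hf
  | ext f g hf hg he hX hZ ihX ihZ => exact hT.2.2 _ _ _ f g hf hg he ihX ihZ

theorem torsGen_val (C : Set (ModA A)) : (torsGen C).1 = {M : ModA A | Gen C M} := by
  apply Set.Subset.antisymm
  · exact Set.sInter_subset_of_mem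
      ⟨⟨{M : ModA A | Gen C M}, gen_isTorsionClass C⟩, fun M hM => Gen.base hM, rfl⟩
  · intro M hM
    refine Set.mem_sInter.2 ?_
    rintro t ⟨T, hT, rfl⟩
    exact Gen.mem_of T.2 hT hM

theorem mem_torsGen_iff {C : Set (ModA A)} {M : ModA A} :
    M ∈ (torsGen C).1 ↔ Gen C M := by rw [torsGen_val]; rfl

theorem tors_le_iff {a b : Tors A} : a ≤ b ↔ a.1 ⊆ b.1 := Iff.rfl

theorem Gen.mono {C D : Set (ModA A)} (h : C ⊆ D) {M : ModA A} (hM : Gen C M) :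
    Gen D M :=
  Gen.mem_of (gen_isTorsionClass D) (fun X hX => Gen.base (h hX)) hM

theorem Gen.trans {C D : Set (ModA A)} (h : ∀ W ∈ C, Gen D W) {M : ModA A}
    (hM : Gen C M) : Gen D M :=
  Gen.mem_of (gen_isTorsionClass D) h hM

/-- The class of zero modules is a torsion class. -/
theorem subsingleton_isTorsionClass :
    IsTorsionClass {N : ModA A | Subsingleton N.carrier} := by
  refine ⟨fun N hN => hN, fun M N hM f hf => ?_, fun X Y Z f g hf hg he hX hZ => ?_⟩
  · haveI : Subsingleton M.carrier := hM
    constructor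
    intro a b
    obtain ⟨x, rfl⟩ := hf a
    obtain ⟨y, rfl⟩ := hf b
    have : x = y := Subsingleton.elim _ _
    rw [this]
  · haveI : Subsingleton X.carrier := hX
    haveI : Subsingleton Z.carrier := hZ
    constructor
    intro a b
    have hab : g (a - b) = 0 := by
      have : g a = g b := Subsingleton.elim _ _
      simp [map_sub, this]
    have : a - b ∈ LinearMap.ker g := hab
    rw [← he] at this
    obtain ⟨x, hx⟩ := this
    have hx0 : x = (0 : X.carrier) := Subsingleton.elim _ _
    have : a - b = 0 := by rw [← hx, hx0, map_zero]
    exact sub_eq_zero.mp this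

def zeroTors (A : Type) [Ring A] : Tors A :=
  ⟨{N : ModA A | Subsingleton N.carrier}, subsingleton_isTorsionClass⟩

theorem bot_tors_val : (⊥ : Tors A).1 = {N : ModA A | Subsingleton N.carrier} := by
  have h1 : (⊥ : Tors A) ≤ zeroTors A := bot_le
  have h2 : zeroTors A ≤ (⊥ : Tors A) := by
    rw [← sInf_univ]
    exact le_sInf fun T _ => fun N hN => T.2.1 N hN
  have := le_antisymm h1 h2
  rw [this]
  rfl

/-- Factoring a linear map through a surjection whose kernel it kills. -/
theorem exists_factor {R M N P : Type*} [Ring R] [AddCommGroup M] [AddCommGroup N]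
    [AddCommGroup P] [Module R M] [Module R N] [Module R P]
    (g : M →ₗ[R] N) (f : M →ₗ[R] P) (hg : Surjective g)
    (hker : LinearMap.ker g ≤ LinearMap.ker f) :
    ∃ h : N →ₗ[R] P, h.comp g = f := by
  set gbar := (LinearMap.ker g).liftQ g le_rfl with hgbar
  have hinj : Injective gbar :=
    LinearMap.ker_eq_bot.mp (Submodule.ker_liftQ_eq_bot _ _ _ le_rfl)
  have hsurj : Surjective gbar := by
    intro n
    obtain ⟨m, rfl⟩ := hg n
    exact ⟨Submodule.Quotient.mk m, by simp [hgbar]⟩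
  set e := LinearEquiv.ofBijective gbar ⟨hinj, hsurj⟩ with he
  refine ⟨((LinearMap.ker g).liftQ f hker).comp e.symm.toLinearMap, ?_⟩
  ext m
  have h1 : e.symm (g m) = Submodule.Quotient.mk m := by
    apply e.injective
    simp [he, hgbar, LinearEquiv.ofBijective_apply]
  simp [h1]

end Stmt19Dev
section Stmt19Dev2

variable {A : Type} [Ring A]

/-- A surjection from a simple module onto a nontrivial module is bijective. -/
theorem bijective_of_simple_surj {S T : ModA A} (hS : IsSimpleModule Aᵐᵒᵖ S.carrier)
    (hT : Nontrivial T.carrier) (f : S.carrier →ₗ[Aᵐᵒᵖ] T.carrier) (hf : Surjective f) :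
    Bijective f := by
  haveI := hS
  refine ⟨?_, hf⟩
  rcases eq_bot_or_eq_top (LinearMap.ker f) with h | h
  · exact LinearMap.ker_eq_bot.mp h
  · exfalso
    have hf0 : f = 0 := by
      ext x
      have : x ∈ LinearMap.ker f := h ▸ Submodule.mem_top
      simpa using this
    obtain ⟨a, b, hab⟩ := hT
    obtain ⟨x, rfl⟩ := hf a
    obtain ⟨y, rfl⟩ := hf b
    rw [hf0] at hab
    simp at hab

/-- A nonzero linear map out of a simple module is injective. -/
theorem injective_of_simple_ne_zero {S : ModA A} {T : Type} [AddCommGroup T]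
    [Module Aᵐᵒᵖ T] (hS : IsSimpleModule Aᵐᵒᵖ S.carrier)
    (f : S.carrier →ₗ[Aᵐᵒᵖ] T) (hf : f ≠ 0) : Injective f := by
  haveI := hS
  rcases eq_bot_or_eq_top (LinearMap.ker f) with h | h
  · exact LinearMap.ker_eq_bot.mp h
  · exact absurd (LinearMap.ker_eq_top.mp h) hf

/-- A simple module lying in a generated torsion class receives a surjection
from a generator. -/
theorem Gen.exists_surj_of_simple {C : Set (ModA A)} {S0 : ModA A}
    (hS0 : IsSimpleModule Aᵐᵒᵖ S0.carrier) {Y : ModA A} (hY : Gen C Y) :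
    ∀ f : Y.carrier →ₗ[Aᵐᵒᵖ] S0.carrier, Surjective f →
      ∃ W ∈ C, ∃ g : W.carrier →ₗ[Aᵐᵒᵖ] S0.carrier, Surjective g := by
  haveI := hS0
  haveI : Nontrivial S0.carrier := IsSimpleModule.nontrivial Aᵐᵒᵖ S0.carrier
  induction hY with
  | base h => exact fun f hf => ⟨_, h, f, hf⟩
  | zero N hN =>
    intro f hf
    haveI : Subsingleton N.carrier := hN
    exact absurd hf.subsingleton (not_subsingleton S0.carrier)
  | quot hM f0 hf0 ih =>
    intro f hf
    exact ih (f.comp f0) (hf.comp hf0)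
  | ext f0 g0 hinj hsurj hexact hX hZ ihX ihZ =>
    intro f hf
    rcases eq_bot_or_eq_top (LinearMap.range (f.comp f0)) with hbot | htop
    · have hker : LinearMap.ker g0 ≤ LinearMap.ker f := by
        intro y hy
        rw [← hexact] at hy
        obtain ⟨x, rfl⟩ := hy
        have : (f.comp f0) x ∈ LinearMap.range (f.comp f0) := LinearMap.mem_range_self _ x
        rw [hbot] at this
        simpa using this
      obtain ⟨h, hh⟩ := exists_factor g0 f hsurj hker
      have hhs : Surjective h := by
        intro p
        obtain ⟨y, rfl⟩ := hf p
        exact ⟨g0 y, by rw [← hh]; rfl⟩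
      exact ihZ h hhs
    · exact ihX (f.comp f0) (LinearMap.range_eq_top.mp htop)

end Stmt19Dev2
section Stmt19Dev3

variable {A : Type} [Ring A]

/-- The class of modules admitting no nonzero map from a submodule to `S0`
is a torsion class. -/
theorem noSubHom_isTorsionClass (S0 : ModA A) :
    IsTorsionClass {Y : ModA A |
      ∀ (p : Submodule Aᵐᵒᵖ Y.carrier) (f : ↥p →ₗ[Aᵐᵒᵖ] S0.carrier), f = 0} := by
  refine ⟨fun N hN => ?_, fun M N hM g hg => ?_, fun X Y Z i g hi hg he hX hZ => ?_⟩
  · haveI : Subsingleton N.carrier := hN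
    intro p f
    ext x
    have : x = 0 := Subsingleton.elim _ _
    rw [this, map_zero]
    rfl
  · intro p f
    set p' := p.comap g with hp'
    have hmaps : ∀ x ∈ p', g x ∈ p := fun x hx => hx
    have h0 : f.comp (g.restrict hmaps) = 0 := hM p' _
    ext ⟨x, hx⟩
    obtain ⟨y, hy⟩ := hg x
    have hy' : y ∈ p' := by simp [hp', Submodule.mem_comap, hy, hx]
    have : (⟨x, hx⟩ : ↥p) = g.restrict hmaps ⟨y, hy'⟩ := by
      apply Subtype.ext
      simp [LinearMap.restrict_apply, hy]
    rw [this]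
    have := LinearMap.congr_fun h0 ⟨y, hy'⟩
    simpa using this
  · intro p f
    -- restriction to the part coming from X vanishes
    set p₁ := p.comap i with hp₁
    have hmaps₁ : ∀ x ∈ p₁, i x ∈ p := fun x hx => hx
    have h₁ : f.comp (i.restrict hmaps₁) = 0 := hX p₁ _
    -- map to Z
    set q' : ↥p →ₗ[Aᵐᵒᵖ] Z.carrier := g.comp p.subtype with hq'
    set q'' := q'.rangeRestrict with hq''
    have hq''surj : Surjective q'' := LinearMap.surjective_rangeRestrict q'
    have hkk : LinearMap.ker q'' ≤ LinearMap.ker f := by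
      rintro ⟨y, hy⟩ hmem
      have hy0 : g y = 0 := by
        have : q' ⟨y, hy⟩ = 0 := by
          have := congrArg (Subtype.val) (show q'' ⟨y, hy⟩ = 0 from hmem)
          simpa [hq''] using this
        simpa [hq'] using this
      have : y ∈ LinearMap.range i := by rw [he]; exact hy0
      obtain ⟨x, hx⟩ := this
      have hxp : x ∈ p₁ := by
        simp [hp₁, Submodule.mem_comap, hx, hy]
      have heq : (⟨y, hy⟩ : ↥p) = i.restrict hmaps₁ ⟨x, hxp⟩ := by
        apply Subtype.ext
        simp [LinearMap.restrict_apply, hx]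
      have := LinearMap.congr_fun h₁ ⟨x, hxp⟩
      simp only [LinearMap.comp_apply, LinearMap.zero_apply] at this
      show f ⟨y, hy⟩ = 0
      rw [heq]
      exact this
    obtain ⟨h, hh⟩ := exists_factor q'' f hq''surj hkk
    have : h = 0 := hZ (LinearMap.range q') h
    rw [← hh, this]
    simp

end Stmt19Dev3
section Stmt19DevK

variable {A : Type} [Ring A] (K : Type) [Field K] [Algebra K A] [FiniteDimensional K A]

noncomputable local instance moduleK1 (M : ModA A) : Module K M.carrier :=
  Module.compHom M.carrier (algebraMap K Aᵐᵒᵖ)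

noncomputable local instance moduleK2 {T : Type} [AddCommGroup T] [Module Aᵐᵒᵖ T]
    (p : Submodule Aᵐᵒᵖ T) : Module K ↥p :=
  Module.compHom ↥p (algebraMap K Aᵐᵒᵖ)

local instance towerK1 (M : ModA A) : IsScalarTower K Aᵐᵒᵖ M.carrier :=
  ⟨fun k a m => by rw [Algebra.smul_def]; exact mul_smul _ a m⟩

local instance towerK2 {T : Type} [AddCommGroup T] [Module Aᵐᵒᵖ T]
    (p : Submodule Aᵐᵒᵖ T) : IsScalarTower K Aᵐᵒᵖ ↥p :=
  ⟨fun k a m => by rw [Algebra.smul_def]; exact mul_smul _ a m⟩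

theorem finiteK_Aop : Module.Finite K Aᵐᵒᵖ :=
  Module.Finite.equiv (MulOpposite.opLinearEquiv K : A ≃ₗ[K] Aᵐᵒᵖ)

local instance finiteK1 (M : ModA A) : Module.Finite K M.carrier := by
  haveI := finiteK_Aop (A := A) (K := K)
  exact Module.Finite.trans Aᵐᵒᵖ M.carrier

include K in
theorem noethAop (M : ModA A) : IsNoetherian Aᵐᵒᵖ M.carrier := by
  haveI : IsNoetherian K M.carrier := isNoetherian_of_isNoetherianRing_of_finite K M.carrier
  exact isNoetherian_of_tower K this

include K in
theorem finAopSub (M : ModA A) (p : Submodule Aᵐᵒᵖ M.carrier) :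
    Module.Finite Aᵐᵒᵖ ↥p := by
  haveI : IsNoetherian Aᵐᵒᵖ ↥p :=
    isNoetherian_of_submodule_of_noetherian _ _ p (noethAop K M)
  infer_instance

/-- Bundling a submodule as an object of `mod A`. -/
noncomputable def subModA (M : ModA A) (p : Submodule Aᵐᵒᵖ M.carrier) : ModA A :=
  @ModA.mk A _ ↥p _ _ (finAopSub K M p)

/-- Bundling a quotient module as an object of `mod A`. -/
noncomputable def quotModA (M : ModA A) (p : Submodule Aᵐᵒᵖ M.carrier) : ModA A :=
  ⟨M.carrier ⧸ p⟩

/-- `K`-dimension of a module in `mod A`. -/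
noncomputable def kdim (M : ModA A) : ℕ :=
  Module.finrank K M.carrier

include K in
/-- Every nontrivial module has a simple quotient. -/
theorem exists_simple_quot_s19 (M : ModA A) (hM : Nontrivial M.carrier) :
    ∃ (S : ModA A) (f : M.carrier →ₗ[Aᵐᵒᵖ] S.carrier),
      IsSimpleModule Aᵐᵒᵖ S.carrier ∧ Surjective f := by
  haveI : IsNoetherian Aᵐᵒᵖ M.carrier := noethAop K M
  have hwf : WellFounded ((· > ·) : Submodule Aᵐᵒᵖ M.carrier → _ → Prop) :=
    IsWellFounded.wf
  have hne : ({p : Submodule Aᵐᵒᵖ M.carrier | p ≠ ⊤}).Nonempty := by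
    refine ⟨⊥, ?_⟩
    obtain ⟨x, hx⟩ := exists_ne (0 : M.carrier)
    intro h
    have : x ∈ (⊥ : Submodule Aᵐᵒᵖ M.carrier) := h ▸ Submodule.mem_top
    exact hx (by simpa using this)
  obtain ⟨m, hm, hmax⟩ := hwf.has_min _ hne
  have hco : IsCoatom m := by
    refine ⟨hm, fun b hb => ?_⟩
    by_contra hbne
    exact hmax b hbne hb
  refine ⟨quotModA M m, m.mkQ, ?_, Submodule.mkQ_surjective m⟩
  exact isSimpleModule_iff_isCoatom.mpr hco

include K in
theorem kdim_pos (M : ModA A) (h : Nontrivial M.carrier) : 0 < kdim K M :=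
  Module.finrank_pos

/-- The kernel of a surjection onto a nontrivial module has smaller dimension. -/
theorem kdim_ker_lt (M S : ModA A) (f : M.carrier →ₗ[Aᵐᵒᵖ] S.carrier)
    (hf : Surjective f) (hS : Nontrivial S.carrier) :
    kdim K (subModA K M (LinearMap.ker f)) < kdim K M := by
  set f' := (f.restrictScalars K : M.carrier →ₗ[K] S.carrier) with hf'
  have hrn := LinearMap.finrank_range_add_finrank_ker f'
  have hr : LinearMap.range f' = ⊤ := LinearMap.range_eq_top.mpr hf
  have h1 : Module.finrank K ↥(LinearMap.range f') = Module.finrank K S.carrier := by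
    rw [hr]; exact finrank_top K S.carrier
  have hpos : 0 < Module.finrank K S.carrier := Module.finrank_pos
  have he : Module.finrank K ↥(LinearMap.ker f') =
      Module.finrank K ↥(LinearMap.ker f) := by
    refine LinearEquiv.finrank_eq
      { toFun := fun x => ⟨x.1, x.2⟩
        invFun := fun x => ⟨x.1, x.2⟩
        map_add' := fun _ _ => rfl
        map_smul' := fun _ _ => Subtype.ext rfl
        left_inv := fun _ => rfl
        right_inv := fun _ => rfl }
  have hgoal : Module.finrank K ↥(LinearMap.ker f) < Module.finrank K M.carrier := by
    omega
  exact hgoal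

end Stmt19DevK
/-- The set of simple quotients of `M`. -/
def SimpleQuot {A : Type} [Ring A] (M : ModA A) : Set (ModA A) :=
  {X | IsSimpleModule Aᵐᵒᵖ X.carrier ∧ ∃ f : M.carrier →ₗ[Aᵐᵒᵖ] X.carrier, Surjective f}

section Stmt19DevK2

variable {A : Type} [Ring A] (K : Type) [Field K] [Algebra K A] [FiniteDimensional K A]

include K in
theorem bot_covby_torsGen_simple (S : ModA A) (hS : IsSimpleModule Aᵐᵒᵖ S.carrier) :
    (⊥ : Tors A) ⋖ torsGen {S} := by
  haveI := hS
  haveI hSnt : Nontrivial S.carrier := IsSimpleModule.nontrivial Aᵐᵒᵖ S.carrier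
  constructor
  · refine lt_of_le_of_ne bot_le ?_
    intro hbot
    have hmem : S ∈ (torsGen {S}).1 := mem_torsGen_iff.mpr (Gen.base rfl)
    rw [← hbot, bot_tors_val] at hmem
    exact absurd hmem (not_subsingleton S.carrier)
  · intro c hc hlt
    obtain ⟨Y, hYc, hYb⟩ := Set.not_subset.mp (fun hsub => hc.not_ge hsub)
    have hYb' : Y ∉ {N : ModA A | Subsingleton N.carrier} := by
      rw [← bot_tors_val]; exact hYb
    haveI hYnt : Nontrivial Y.carrier := not_subsingleton_iff_nontrivial.mp hYb'
    have hYgen : Gen {S} Y := mem_torsGen_iff.mp (hlt.le hYc)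
    obtain ⟨S', q, hS', hq⟩ := exists_simple_quot_s19 K Y hYnt
    haveI := hS'
    have hS'c : S' ∈ c.1 := c.2.2.1 Y S' hYc q hq
    obtain ⟨W, hW, g, hg⟩ := Gen.exists_surj_of_simple hS' hYgen q hq
    rw [Set.mem_singleton_iff] at hW
    subst hW
    have hbij : Bijective g :=
      bijective_of_simple_surj hS (IsSimpleModule.nontrivial Aᵐᵒᵖ S'.carrier) g hg
    set e := LinearEquiv.ofBijective g hbij with he
    have hSc : W ∈ c.1 := c.2.2.1 S' W hS'c e.symm.toLinearMap e.symm.surjective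
    have : torsGen {W} ≤ c := torsGen_le (by simpa using hSc)
    exact hlt.not_ge this

include K in
theorem key_lemma (h : UpperSemimodular (Tors A)) (S0 S1 E : ModA A)
    (hS0 : IsSimpleModule Aᵐᵒᵖ S0.carrier) (hS1 : IsSimpleModule Aᵐᵒᵖ S1.carrier)
    (i : S0.carrier →ₗ[Aᵐᵒᵖ] E.carrier) (g : E.carrier →ₗ[Aᵐᵒᵖ] S1.carrier)
    (hi : Injective i) (hg : Surjective g) (hex : LinearMap.range i = LinearMap.ker g) :
    Gen (SimpleQuot E) S0 := by
  by_contra hcon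
  haveI := hS0
  haveI := hS1
  haveI hS0nt : Nontrivial S0.carrier := IsSimpleModule.nontrivial Aᵐᵒᵖ S0.carrier
  haveI hS1nt : Nontrivial S1.carrier := IsSimpleModule.nontrivial Aᵐᵒᵖ S1.carrier
  have hS1mem : S1 ∈ SimpleQuot E := ⟨hS1, g, hg⟩
  have fact1 : ∀ q : E.carrier →ₗ[Aᵐᵒᵖ] S0.carrier, ¬ Surjective q := by
    intro q hq
    exact hcon (Gen.base ⟨hS0, q, hq⟩)
  have fact2 : ∀ q : S1.carrier →ₗ[Aᵐᵒᵖ] S0.carrier, ¬ Surjective q := by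
    intro q hq
    exact hcon (Gen.quot (Gen.base hS1mem) q hq)
  set a := torsGen {S1} with ha
  set b := torsGen {S0} with hb
  have hcov_a : (⊥ : Tors A) ⋖ a := bot_covby_torsGen_simple K S1 hS1
  have hcov_b : (⊥ : Tors A) ⋖ b := bot_covby_torsGen_simple K S0 hS0
  have hmeet : a ⊓ b = ⊥ := by
    refine le_antisymm ?_ bot_le
    intro Y hY
    have hYa : Y ∈ a.1 := tors_le_iff.mp inf_le_left hY
    have hYb : Y ∈ b.1 := tors_le_iff.mp inf_le_right hY
    show Y ∈ (⊥ : Tors A).1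
    rw [bot_tors_val]
    by_contra hYnt
    haveI hYnt' : Nontrivial Y.carrier := not_subsingleton_iff_nontrivial.mp hYnt
    obtain ⟨S', q, hS', hq⟩ := exists_simple_quot_s19 K Y hYnt'
    haveI := hS'
    haveI hS'nt : Nontrivial S'.carrier := IsSimpleModule.nontrivial Aᵐᵒᵖ S'.carrier
    obtain ⟨W1, hW1, g1, hg1⟩ :=
      Gen.exists_surj_of_simple hS' (mem_torsGen_iff.mp hYa) q hq
    rw [Set.mem_singleton_iff] at hW1
    subst hW1
    obtain ⟨W0, hW0, g0, hg0⟩ :=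
      Gen.exists_surj_of_simple hS' (mem_torsGen_iff.mp hYb) q hq
    rw [Set.mem_singleton_iff] at hW0
    subst hW0
    have hb1 : Bijective g1 := bijective_of_simple_surj hS1 hS'nt g1 hg1
    have hb0 : Bijective g0 := bijective_of_simple_surj hS0 hS'nt g0 hg0
    set e0 := LinearEquiv.ofBijective g0 hb0
    set e1 := LinearEquiv.ofBijective g1 hb1
    exact fact2 (e0.symm.toLinearMap.comp e1.toLinearMap)
      (e0.symm.surjective.comp e1.surjective)
  have hcov_a' : a ⊓ b ⋖ a := by rw [hmeet]; exact hcov_a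
  have hcov_b' : a ⊓ b ⋖ b := by rw [hmeet]; exact hcov_b
  obtain ⟨hcova, _⟩ := h a b hcov_a' hcov_b'
  set x := torsGen {E} with hx
  set j := a ⊔ b with hj
  have hEx : E ∈ x.1 := mem_torsGen_iff.mpr (Gen.base rfl)
  have hS1a : S1 ∈ a.1 := mem_torsGen_iff.mpr (Gen.base rfl)
  have hS0b : S0 ∈ b.1 := mem_torsGen_iff.mpr (Gen.base rfl)
  have hax : a ≤ x := torsGen_le (by
    simp only [Set.singleton_subset_iff]
    exact mem_torsGen_iff.mpr (Gen.quot (Gen.base rfl) g hg))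
  have hane : a ≠ x := by
    intro heq
    have hEa : Gen {S1} E := mem_torsGen_iff.mp
      (show E ∈ (torsGen {S1} : Tors A).1 by rw [← ha, heq]; exact hEx)
    -- the torsion class of modules with no nonzero hom from a submodule to S0
    have hU := noSubHom_isTorsionClass S0
    have hS1U : S1 ∈ {Y : ModA A |
        ∀ (p : Submodule Aᵐᵒᵖ Y.carrier) (f : ↥p →ₗ[Aᵐᵒᵖ] S0.carrier), f = 0} := by
      intro p f
      rcases eq_bot_or_eq_top p with rfl | rfl
      · ext v
        obtain ⟨w, hw⟩ := v
        have hw0 : w = 0 := by simpa using hw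
        subst hw0
        have : (⟨(0 : S1.carrier), by simp⟩ : ↥(⊥ : Submodule Aᵐᵒᵖ S1.carrier)) = 0 :=
          Subtype.ext rfl
        rw [this, map_zero]
        rfl
      · by_contra hf0
        set m := f.comp (Submodule.topEquiv (R := Aᵐᵒᵖ) (M := S1.carrier)).symm.toLinearMap
          with hm
        have hm0 : m ≠ 0 := by
          intro hmz
          apply hf0
          ext v
          have hv : v = (Submodule.topEquiv (R := Aᵐᵒᵖ)).symm (v.1) := by
            apply Subtype.ext; rfl
          rw [hv]
          have := LinearMap.congr_fun hmz v.1
          simpa [hm] using this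
        rcases eq_bot_or_eq_top (LinearMap.range m) with hrb | hrt
        · exact hm0 (LinearMap.range_eq_bot.mp hrb)
        · exact fact2 m (LinearMap.range_eq_top.mp hrt)
    have hEU : E ∈ {Y : ModA A |
        ∀ (p : Submodule Aᵐᵒᵖ Y.carrier) (f : ↥p →ₗ[Aᵐᵒᵖ] S0.carrier), f = 0} :=
      Gen.mem_of hU (by simpa using hS1U) hEa
    set e := LinearEquiv.ofInjective i hi with he
    have h0 := hEU (LinearMap.range i) e.symm.toLinearMap
    obtain ⟨s, hs⟩ := exists_ne (0 : S0.carrier)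
    apply hs
    have h1 : e.symm.toLinearMap (e s) = 0 := by rw [h0]; rfl
    rw [← LinearEquiv.symm_apply_apply e s]
    exact h1
  have hxj : x ≤ j := by
    refine torsGen_le ?_
    simp only [Set.singleton_subset_iff]
    exact j.2.2.2 S0 E S1 i g hi hg hex
      (tors_le_iff.mp le_sup_right hS0b) (tors_le_iff.mp le_sup_left hS1a)
  have hxjne : x ≠ j := by
    intro heq
    have hS0j : S0 ∈ j.1 := tors_le_iff.mp le_sup_right hS0b
    have hS0x : Gen {E} S0 := mem_torsGen_iff.mp
      (show S0 ∈ (torsGen {E} : Tors A).1 by rw [← hx, heq]; exact hS0j)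
    obtain ⟨W, hW, q, hq⟩ :=
      Gen.exists_surj_of_simple hS0 hS0x LinearMap.id (fun s => ⟨s, rfl⟩)
    rw [Set.mem_singleton_iff] at hW
    subst hW
    exact fact1 q hq
  exact hcova.2 (hax.lt_of_ne hane) (hxj.lt_of_ne hxjne)

end Stmt19DevK2
section Stmt19Main

variable {A : Type} [Ring A] (K : Type) [Field K] [Algebra K A] [FiniteDimensional K A]

include K in
/-- Main lemma: every module lies in the torsion class generated by its simple
quotients, provided `tors A` is upper semimodular. -/
theorem gen_by_simple_quotients (h : UpperSemimodular (Tors A)) :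
    ∀ (n : ℕ) (M : ModA A), kdim K M ≤ n → Gen (SimpleQuot M) M := by
  intro n
  induction n with
  | zero =>
    intro M hM
    rcases subsingleton_or_nontrivial M.carrier with hs | hs
    · exact Gen.zero M hs
    · exfalso
      have : 0 < kdim K M := kdim_pos K M hs
      omega
  | succ n IH =>
    intro M hM
    rcases subsingleton_or_nontrivial M.carrier with hs | hs
    · exact Gen.zero M hs
    obtain ⟨S1, f, hS1, hf⟩ := exists_simple_quot_s19 K M hs
    haveI := hS1
    haveI hS1nt : Nontrivial S1.carrier := IsSimpleModule.nontrivial Aᵐᵒᵖ S1.carrier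
    set N : ModA A := subModA K M (LinearMap.ker f) with hNdef
    have hNd : kdim K N ≤ n := by
      have h2 := kdim_ker_lt K M S1 f hf hS1nt
      rw [← hNdef] at h2
      omega
    have hNgen : Gen (SimpleQuot N) N := IH N hNd
    set ik : N.carrier →ₗ[Aᵐᵒᵖ] M.carrier := (LinearMap.ker f).subtype with hik
    have hik_inj : Injective ik := Submodule.injective_subtype _
    -- every simple quotient of `N` lies in `Gen (SimpleQuot M)`
    have hstep : ∀ W ∈ SimpleQuot N, Gen (SimpleQuot M) W := by
      rintro W ⟨hWs, u, hu⟩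
      haveI := hWs
      haveI hWnt : Nontrivial W.carrier := IsSimpleModule.nontrivial Aᵐᵒᵖ W.carrier
      set Kp : Submodule Aᵐᵒᵖ M.carrier := (LinearMap.ker u).map ik with hKp
      set E : ModA A := quotModA M Kp with hEdef
      set pi : M.carrier →ₗ[Aᵐᵒᵖ] E.carrier := Kp.mkQ with hpi
      have hpis : Surjective pi := Submodule.mkQ_surjective Kp
      have hKf : Kp ≤ LinearMap.ker f := by
        rintro y hy
        obtain ⟨z, hz, rfl⟩ := hy
        exact z.2
      set g' : E.carrier →ₗ[Aᵐᵒᵖ] S1.carrier := Kp.liftQ f hKf with hg'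
      have hg'pi : ∀ m : M.carrier, g' (pi m) = f m := fun m => rfl
      have hg's : Surjective g' := by
        intro s
        obtain ⟨m, rfl⟩ := hf s
        exact ⟨pi m, hg'pi m⟩
      set w : N.carrier →ₗ[Aᵐᵒᵖ] E.carrier := pi.comp ik with hw
      have hker_uw : LinearMap.ker u ≤ LinearMap.ker w := by
        intro z hz
        have hmem : ik z ∈ Kp := Submodule.mem_map_of_mem hz
        show pi (ik z) = 0
        exact (Submodule.Quotient.mk_eq_zero Kp).mpr hmem
      obtain ⟨i', hi'⟩ := exists_factor u w hu hker_uw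
      have hi'u : ∀ z : N.carrier, i' (u z) = w z := fun z => by
        have := LinearMap.congr_fun hi' z
        simpa using this
      have hwz : ∀ z : N.carrier, w z = 0 → z ∈ LinearMap.ker u := by
        intro z hz
        have : ik z ∈ Kp := by
          have hz' : Submodule.Quotient.mk (p := Kp) (ik z) = (0 : M.carrier ⧸ Kp) := hz
          rwa [Submodule.Quotient.mk_eq_zero] at hz'
        obtain ⟨z', hz', hzz⟩ := this
        have : z' = z := hik_inj hzz
        rwa [← this]
      have hi'_inj : Injective i' := by
        rw [← LinearMap.ker_eq_bot]
        rw [Submodule.eq_bot_iff]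
        intro y hy
        obtain ⟨z, rfl⟩ := hu y
        have hwz0 : w z = 0 := by rw [← hi'u]; exact hy
        exact hwz z hwz0
      have hexact : LinearMap.range i' = LinearMap.ker g' := by
        apply le_antisymm
        · rintro _ ⟨y, rfl⟩
          obtain ⟨z, rfl⟩ := hu y
          rw [hi'u]
          show g' (pi (ik z)) = 0
          rw [hg'pi]
          exact z.2
        · intro z hz
          obtain ⟨m, rfl⟩ := hpis z
          have hm : f m = 0 := by rw [← hg'pi]; exact hz
          refine ⟨u ⟨m, LinearMap.mem_ker.mpr hm⟩, ?_⟩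
          exact (hi'u _).trans rfl
      have hWE : Gen (SimpleQuot E) W :=
        key_lemma K h W S1 E hWs hS1 i' g' hi'_inj hg's hexact
      refine Gen.mono ?_ hWE
      rintro X ⟨hXs, q, hq⟩
      exact ⟨hXs, q.comp pi, hq.comp hpis⟩
    have hNgen' : Gen (SimpleQuot M) N := Gen.trans hstep hNgen
    have hS1mem : S1 ∈ SimpleQuot M := ⟨hS1, f, hf⟩
    exact Gen.ext ik f hik_inj hf (Submodule.range_subtype _) hNgen' (Gen.base hS1mem)

end Stmt19Main
/-- if `tors A` is upper semimodular, then every torsion class is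
generated by the simple modules it contains. -/
theorem stmt19 (K A : Type) [Field K] [IsAlgClosed K] [Ring A] [Algebra K A]
    [FiniteDimensional K A]
    (h : UpperSemimodular (Tors A)) :
    ∀ T : Tors A, T = torsGen {M : ModA A | IsSimpleModule Aᵐᵒᵖ M.carrier ∧ M ∈ T.1} := by
  intro T
  apply le_antisymm
  · intro M hM
    have h1 : Gen (SimpleQuot M) M :=
      gen_by_simple_quotients K h (kdim K M) M le_rfl
    have h2 : SimpleQuot M ⊆ {X : ModA A | IsSimpleModule Aᵐᵒᵖ X.carrier ∧ X ∈ T.1} := by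
      rintro X ⟨hXs, q, hq⟩
      exact ⟨hXs, T.2.2.1 M X hM q hq⟩
    exact mem_torsGen_iff.mpr (Gen.mono h2 h1)
  · exact torsGen_le (fun X hX => hX.2)
end
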